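/- arXiv:2204.12419 — 8 statements merged into one kernel-verified Lean document; each statement's English description precedes it below -/
import Mathlib

section
/- If A is a totally unimodular matrix and x is a real vector with Ax = 0, then there exists an integer vector x' with Ax' = 0 such that each coordinate x'_i is either the floor or the ceiling of x_i. -/
open Matrix Finset

/-- From linearly independent columns, extract a set of rows giving an invertible
square submatrix. -/
lemma tu_aux_exists_unit_submatrix {m ι : Type*} [Fintype m] [Fintype ι] [DecidableEq ι]
    (M : Matrix m ι ℝ) (hM : LinearIndependent ℝ (fun j : ι => Mᵀ j)) :
    ∃ r : ι → m, Function.Injective r ∧ IsUnit (M.submatrix r id) := by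
  classical
  have hrank : M.rank = Fintype.card ι := by
    rw [← Matrix.rank_transpose]
    exact hM.rank_matrix
  have hspan : Submodule.span ℝ (Set.range M) = ⊤ := by
    apply Submodule.eq_top_of_finrank_eq
    rw [show Set.range M = Set.range M.row from rfl, ← Matrix.rank_eq_finrank_span_row M, hrank, Module.finrank_pi]
  obtain ⟨b, hbsub, hbspan, hbind⟩ := exists_linearIndependent ℝ (Set.range M)
  haveI : Fintype b := ((Set.finite_range M).subset hbsub).fintype
  have hcard : Fintype.card b = Fintype.card ι := by
    have h1 := finrank_span_set_eq_card hbind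
    rw [hbspan, hspan, finrank_top, Module.finrank_pi, Set.toFinset_card] at h1
    omega
  let e : ι ≃ b := (Fintype.equivOfCardEq hcard).symm
  choose f hf using fun w : b => hbsub w.2
  refine ⟨fun j => f (e j), ?_, ?_⟩
  · intro j1 j2 h
    simp only at h
    have h2 : ((e j1 : ι → ℝ)) = ((e j2 : ι → ℝ)) := by rw [← hf (e j1), ← hf (e j2), h]
    exact e.injective (Subtype.coe_injective h2)
  · rw [← Matrix.linearIndependent_rows_iff_isUnit]
    have hrows : (fun j : ι => (M.submatrix (fun j => f (e j)) id) j)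
        = fun j : ι => ((e j : ι → ℝ)) := by
      funext j
      exact hf (e j)
    rw [show (M.submatrix (fun j => f (e j)) id).row = fun j : ι => ((e j : ι → ℝ)) from hrows]
    exact hbind.comp e e.injective

/-- Cramer's rule integrality: a real solution of an integer system with determinant `±1`
is integral. -/
lemma tu_aux_cramer {ι : Type*} [Fintype ι] [DecidableEq ι]
    (N : Matrix ι ι ℤ) (v : ι → ℝ) (b : ι → ℤ)
    (hdet : (N.map (Int.cast : ℤ → ℝ)).det = 1 ∨ (N.map (Int.cast : ℤ → ℝ)).det = -1)
    (hv : (N.map (Int.cast : ℤ → ℝ)).mulVec v = fun j => (b j : ℝ)) :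
    ∀ j, ∃ k : ℤ, v j = (k : ℝ) := by
  set Nr := N.map (Int.cast : ℤ → ℝ) with hNr
  have hunit : IsUnit Nr := by
    rw [Matrix.isUnit_iff_isUnit_det]
    rcases hdet with h | h <;> simp [h]
  have hinj := Matrix.mulVec_injective_iff_isUnit.mpr hunit
  have h1 : Nr.mulVec (Matrix.cramer Nr (fun j => (b j : ℝ))) = Nr.mulVec (Nr.det • v) := by
    rw [Matrix.mulVec_cramer, ← hv, Matrix.mulVec_smul]
  have hcr : Matrix.cramer Nr (fun j => (b j : ℝ)) = Nr.det • v := hinj h1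
  intro j
  have hint : Matrix.cramer Nr (fun j => (b j : ℝ)) j = ((Matrix.cramer N b j : ℤ) : ℝ) := by
    rw [Matrix.cramer_apply, Matrix.cramer_apply]
    have hupd : Nr.updateCol j (fun j => (b j : ℝ)) = (N.updateCol j b).map Int.cast := by
      rw [Matrix.map_updateCol]
      rfl
    rw [hupd]
    exact ((RingHom.map_det (Int.castRingHom ℝ) (N.updateCol j b)).symm : _)
  have hj := congrFun hcr j
  rw [hint] at hj
  rcases hdet with h | h
  · refine ⟨Matrix.cramer N b j, ?_⟩
    rw [hj, Pi.smul_apply, h, smul_eq_mul]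
    ring
  · refine ⟨-(Matrix.cramer N b j), ?_⟩
    rw [Pi.smul_apply, h, smul_eq_mul] at hj
    push_cast
    linarith

/-- If `A` is a totally unimodular matrix and `x` is a real vector with
`A x = 0`, then there exists an integer vector `x'` with `A x' = 0` such that each
coordinate `x'_i` is either the floor or the ceiling of `x_i`. -/
theorem tu_integer_rounding_of_kernel {m n : Type*} [Fintype m] [Fintype n]
    (A : Matrix m n ℝ) (hA : A.IsTotallyUnimodular)
    (x : n → ℝ) (hx : A.mulVec x = 0) :
    ∃ x' : n → ℤ, A.mulVec (fun i => (x' i : ℝ)) = 0 ∧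
      ∀ i, x' i = ⌊x i⌋ ∨ x' i = ⌈x i⌉ := by
  classical
  obtain ⟨B, hB⟩ : ∃ B : Matrix m n ℤ, ∀ i j, A i j = (B i j : ℝ) := by
    refine ⟨fun i j => ⌊A i j⌋, fun i j => ?_⟩
    obtain ⟨s, hs⟩ := hA.apply i j
    cases s <;> simp [← hs] <;> norm_num
  have key : ∀ N : ℕ, ∀ z : n → ℝ, A.mulVec z = 0 →
      (∀ i, (⌊x i⌋ : ℝ) ≤ z i ∧ z i ≤ (⌈x i⌉ : ℝ)) →
      (Finset.univ.filter fun i => ∀ k : ℤ, z i ≠ (k : ℝ)).card ≤ N →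
      ∃ x' : n → ℤ, A.mulVec (fun i => (x' i : ℝ)) = 0 ∧
        ∀ i, ⌊x i⌋ ≤ x' i ∧ x' i ≤ ⌈x i⌉ := by
    intro N
    induction N with
    | zero =>
      intro z hz hbnd hcard
      have hall : ∀ i, ∃ k : ℤ, z i = (k : ℝ) := by
        intro i
        by_contra h
        push_neg at h
        have hmem : i ∈ Finset.univ.filter fun i => ∀ k : ℤ, z i ≠ (k : ℝ) := by
          simp only [Finset.mem_filter, Finset.mem_univ, true_and]
          exact h
        have := Finset.card_pos.mpr ⟨i, hmem⟩
        omega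
      refine ⟨fun i => ⌊z i⌋, ?_, ?_⟩
      · have hzz : (fun i => ((⌊z i⌋ : ℤ) : ℝ)) = z := by
          funext i
          obtain ⟨k, hk⟩ := hall i
          rw [hk]
          norm_num
        rw [hzz]
        exact hz
      · intro i
        obtain ⟨k, hk⟩ := hall i
        have h1 := (hbnd i).1
        have h2 := (hbnd i).2
        rw [hk] at h1 h2
        constructor
        · simp only [hk, Int.floor_intCast]
          exact_mod_cast h1
        · simp only [hk, Int.floor_intCast]
          exact_mod_cast h2
    | succ N ih =>
      intro z hz hbnd hcard
      set F := Finset.univ.filter (fun i => ∀ k : ℤ, z i ≠ (k : ℝ)) with hFdef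
      by_cases hcard' : F.card ≤ N
      · exact ih z hz hbnd hcard'
      have hFne : F.Nonempty := Finset.card_pos.mp (by omega)
      by_cases hind : LinearIndependent ℝ (fun j : {j // j ∈ F} => (fun i => A i (j : n)))
      · exfalso
        set M : Matrix m {j // j ∈ F} ℝ := A.submatrix id (fun j => (j : n)) with hMdef
        obtain ⟨r, hrinj, hrunit⟩ := tu_aux_exists_unit_submatrix M hind
        set NZ : Matrix {j // j ∈ F} {j // j ∈ F} ℤ := B.submatrix r (fun j => (j : n)) with hNZdef
        have hNr : M.submatrix r id = NZ.map (Int.cast : ℤ → ℝ) := by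
          funext j j'
          simp [hMdef, hNZdef, hB]
        have hdet : (NZ.map (Int.cast : ℤ → ℝ)).det = 1 ∨
            (NZ.map (Int.cast : ℤ → ℝ)).det = -1 := by
          rw [← hNr]
          obtain ⟨s, hs⟩ := (Matrix.isTotallyUnimodular_iff_fintype A).mp hA
            {j // j ∈ F} r (fun j => (j : n))
          have hne : (M.submatrix r id).det ≠ 0 :=
            ((Matrix.isUnit_iff_isUnit_det _).mp hrunit).ne_zero
          have heq : M.submatrix r id = A.submatrix r (fun j : {j // j ∈ F} => (j : n)) := rfl
          rw [heq, ← hs] at hne ⊢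
          cases s <;> simp_all
        set zI : n → ℤ := fun j => ⌊z j⌋ with hzIdef
        have hzI : ∀ j, j ∉ F → z j = (zI j : ℝ) := by
          intro j hj
          rw [hFdef] at hj
          simp only [Finset.mem_filter, Finset.mem_univ, true_and] at hj
          push_neg at hj
          obtain ⟨k, hk⟩ := hj
          rw [hk]
          simp [hzIdef, hk]
        set bI : {j // j ∈ F} → ℤ := fun j0 => - ∑ j' ∈ Fᶜ, B (r j0) j' * zI j' with hbIdef
        have hmv : (NZ.map (Int.cast : ℤ → ℝ)).mulVec (fun j => z (j : n))
            = fun j0 => (bI j0 : ℝ) := by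
          funext j0
          have h0 := congrFun hz (r j0)
          simp only [Matrix.mulVec, dotProduct, Pi.zero_apply] at h0 ⊢
          have hsplit := Finset.sum_add_sum_compl F (fun j' => A (r j0) j' * z j')
          rw [← hsplit] at h0
          have hL : ∑ j' : {j // j ∈ F}, (NZ.map (Int.cast : ℤ → ℝ)) j0 j' * z (j' : n)
              = ∑ j' ∈ F, A (r j0) j' * z j' := by
            rw [← Finset.sum_coe_sort F (fun j' => A (r j0) j' * z j')]
            apply Finset.sum_congr rfl
            intro j' _
            simp [hNZdef, hB]
          rw [hL]
          have hR : ∑ j' ∈ Fᶜ, A (r j0) j' * z j'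
              = ((∑ j' ∈ Fᶜ, B (r j0) j' * zI j' : ℤ) : ℝ) := by
            push_cast
            apply Finset.sum_congr rfl
            intro j' hj'
            rw [hB, hzI j' (Finset.mem_compl.mp hj')]
          rw [hR] at h0
          simp only [hbIdef]
          push_cast
          push_cast at h0
          linarith
        have hint := tu_aux_cramer NZ (fun j => z (j : n)) bI hdet hmv
        obtain ⟨j0, hj0⟩ := hFne
        obtain ⟨k, hk⟩ := hint ⟨j0, hj0⟩
        have hj0' := (Finset.mem_filter.mp hj0).2 k
        exact hj0' hk
      · rw [Fintype.not_linearIndependent_iff] at hind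
        obtain ⟨g, hg, j₁, hj₁⟩ := hind
        set d : n → ℝ := fun j => if h : j ∈ F then g ⟨j, h⟩ else 0 with hd
        have hdA : A.mulVec d = 0 := by
          funext i
          have hgi := congrFun hg i
          simp only [Finset.sum_apply, Pi.smul_apply, smul_eq_mul, Pi.zero_apply] at hgi
          simp only [Matrix.mulVec, dotProduct, Pi.zero_apply]
          have h1 : ∑ j, A i j * d j = ∑ j ∈ F, A i j * d j := by
            refine (Finset.sum_subset (Finset.subset_univ F) ?_).symm
            intro j _ hj
            simp [hd, hj]
          rw [h1, ← Finset.sum_coe_sort F (fun j => A i j * d j), ← hgi]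
          apply Finset.sum_congr rfl
          intro j _
          have hdj : d (j : n) = g j := by simp [hd]
          rw [hdj]
          ring
        have hsupp : ∀ j, d j ≠ 0 → j ∈ F := by
          intro j h
          by_contra hc
          simp [hd, hc] at h
        set S := Finset.univ.filter (fun j => d j ≠ 0) with hS
        have hj₁d : d (j₁ : n) = g j₁ := by simp [hd]
        have hSne : S.Nonempty := ⟨j₁, by simp [hS, hj₁d, hj₁]⟩
        have hstrict : ∀ j ∈ S, (⌊x j⌋ : ℝ) < z j ∧ z j < (⌈x j⌉ : ℝ) := by
          intro j hj
          have hjF : j ∈ F := hsupp j (by simpa [hS] using hj)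
          have hzj := (Finset.mem_filter.mp hjF).2
          refine ⟨lt_of_le_of_ne (hbnd j).1 ?_, lt_of_le_of_ne (hbnd j).2 ?_⟩
          · intro h; exact hzj ⌊x j⌋ h.symm
          · intro h; exact hzj ⌈x j⌉ h
        set c : n → ℝ := fun j => if 0 < d j then ((⌈x j⌉ : ℝ) - z j) / d j
            else ((⌊x j⌋ : ℝ) - z j) / d j with hc
        have hcpos : ∀ j ∈ S, 0 < c j := by
          intro j hj
          have hdj : d j ≠ 0 := by simpa [hS] using hj
          obtain ⟨h1, h2⟩ := hstrict j hj
          simp only [hc]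
          by_cases hpos : 0 < d j
          · rw [if_pos hpos]; exact div_pos (by linarith) hpos
          · rw [if_neg hpos]
            have hneg : d j < 0 := lt_of_le_of_ne (not_lt.mp hpos) hdj
            exact div_pos_of_neg_of_neg (by linarith) hneg
        obtain ⟨j0, hj0S, hj0min⟩ := S.exists_min_image c hSne
        set t := c j0 with ht
        have htpos : 0 < t := hcpos j0 hj0S
        set z' : n → ℝ := fun j => z j + t * d j with hz'
        have hz'A : A.mulVec z' = 0 := by
          have hzz : z' = z + t • d := by funext j; simp [hz', smul_eq_mul]
          rw [hzz, Matrix.mulVec_add, Matrix.mulVec_smul, hz, hdA]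
          simp
        have hends : ∀ j ∈ S, c j = t → (z' j = (⌊x j⌋ : ℝ) ∨ z' j = (⌈x j⌉ : ℝ)) := by
          intro j hj hcj
          have hdj : d j ≠ 0 := by simpa [hS] using hj
          simp only [hz']
          rw [← hcj]
          simp only [hc]
          by_cases hpos : 0 < d j
          · right; rw [if_pos hpos]; field_simp; ring
          · left; rw [if_neg hpos]; field_simp; ring
        have hbnd' : ∀ i, (⌊x i⌋ : ℝ) ≤ z' i ∧ z' i ≤ (⌈x i⌉ : ℝ) := by
          intro i
          by_cases hiS : i ∈ S
          · have hdj : d i ≠ 0 := by simpa [hS] using hiS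
            have hti : t ≤ c i := hj0min i hiS
            obtain ⟨h1, h2⟩ := hstrict i hiS
            simp only [hz']
            by_cases hpos : 0 < d i
            · have hci : c i = ((⌈x i⌉ : ℝ) - z i) / d i := by
                simp only [hc]; rw [if_pos hpos]
              constructor
              · nlinarith
              · have hmul := mul_le_mul_of_nonneg_right hti (le_of_lt hpos)
                rw [hci, div_mul_cancel₀ _ hdj] at hmul
                linarith
            · have hneg : d i < 0 := lt_of_le_of_ne (not_lt.mp hpos) hdj
              have hci : c i = ((⌊x i⌋ : ℝ) - z i) / d i := by
                simp only [hc]; rw [if_neg hpos]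
              constructor
              · have hmul := mul_le_mul_of_nonpos_right hti (le_of_lt hneg)
                rw [hci, div_mul_cancel₀ _ hdj] at hmul
                linarith
              · nlinarith
          · have hdi : d i = 0 := by
              by_contra h
              exact hiS (by simp [hS, h])
            simp only [hz', hdi]
            constructor
            · have := (hbnd i).1; linarith
            · have := (hbnd i).2; linarith
        have hj0int : ∃ k : ℤ, z' j0 = (k : ℝ) := by
          rcases hends j0 hj0S ht.symm with h | h
          · exact ⟨⌊x j0⌋, h⟩
          · exact ⟨⌈x j0⌉, h⟩
        have hsub : (Finset.univ.filter fun i => ∀ k : ℤ, z' i ≠ (k : ℝ)) ⊆ F.erase j0 := by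
          intro i hi
          simp only [Finset.mem_filter, Finset.mem_univ, true_and] at hi
          rw [Finset.mem_erase]
          constructor
          · rintro rfl
            obtain ⟨k, hk⟩ := hj0int
            exact hi k hk
          · by_contra hiF
            have hdi : d i = 0 := by simp only [hd]; exact dif_neg hiF
            have hzi : z' i = z i := by simp [hz', hdi]
            have hex : ∃ k : ℤ, z i = (k : ℝ) := by
              have hh := hiF
              rw [hFdef] at hh
              simp only [Finset.mem_filter, Finset.mem_univ, true_and] at hh
              push_neg at hh
              exact hh
            obtain ⟨k, hk⟩ := hex
            exact hi k (by rw [hzi, hk])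
        have hj0F : j0 ∈ F := hsupp j0 (by simpa [hS] using hj0S)
        have hcard'' : (Finset.univ.filter fun i => ∀ k : ℤ, z' i ≠ (k : ℝ)).card ≤ N := by
          have hc1 := Finset.card_le_card hsub
          have hc2 := Finset.card_erase_of_mem hj0F
          omega
        exact ih z' hz'A hbnd' hcard''
  obtain ⟨x', h1, h2⟩ := key (Fintype.card n) x hx
    (fun i => ⟨Int.floor_le (x i), Int.le_ceil (x i)⟩)
    ((Finset.card_filter_le _ _).trans (le_of_eq Finset.card_univ))
  refine ⟨x', h1, fun i => ?_⟩
  have h3 := h2 i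
  have h4 := Int.ceil_le_floor_add_one (x i)
  omega
end

section
/- If A is a totally unimodular matrix and there exists a nonzero real vector x with Ax = 0, then there exists a nonzero vector x' with coordinates in {-1, 0, 1} such that Ax' = 0 and the support of x' is contained in the support of x, with matching signs (x'_i > 0 implies x_i > 0 and x'_i < 0 implies x_i < 0). -/
open Matrix Finset Module

private lemma shrink_supp {n : Type*} [Fintype n] {x u : n → ℝ} (hu : u ≠ 0)
    (hsupp : ∀ i, x i = 0 → u i = 0) {j0 : n} (hj0 : x j0 ≠ 0) (huj0 : u j0 = 0) :
    ∃ y : n → ℝ, (∃ t : ℝ, y = x - t • u) ∧ y ≠ 0 ∧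
      Function.support y ⊂ Function.support x ∧
      (∀ i, 0 < y i → 0 < x i) ∧ (∀ i, y i < 0 → x i < 0) := by
  classical
  have hF : (Finset.univ.filter (fun i => u i ≠ 0)).Nonempty := by
    obtain ⟨i, hi⟩ := Function.ne_iff.mp hu
    exact ⟨i, Finset.mem_filter.mpr ⟨Finset.mem_univ i, by simpa using hi⟩⟩
  obtain ⟨p, hpF, hpmin⟩ := Finset.exists_min_image _ (fun i => |x i / u i|) hF
  have hup : u p ≠ 0 := by simpa using hpF
  set t := x p / u p with ht
  have key : ∀ i, (0 < (x - t • u) i → 0 < x i) ∧ ((x - t • u) i < 0 → x i < 0) := by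
    intro i
    by_cases hui : u i = 0
    · simp [hui]
    · have hxi : x i ≠ 0 := fun h => hui (hsupp i h)
      have hle : |t| ≤ |x i / u i| :=
        hpmin i (Finset.mem_filter.mpr ⟨Finset.mem_univ i, hui⟩)
      have hle' : |t| ≤ |x i| / |u i| := by rw [← abs_div]; exact hle
      have hui' : 0 < |u i| := abs_pos.mpr hui
      have hle2 : |t * u i| ≤ |x i| := by
        rw [abs_mul]
        calc |t| * |u i| ≤ (|x i| / |u i|) * |u i| :=
              mul_le_mul_of_nonneg_right hle' (le_of_lt hui')
          _ = |x i| := div_mul_cancel₀ _ (ne_of_gt hui')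
      have h1 : t * u i ≤ |x i| := le_trans (le_abs_self _) hle2
      have h2 : -|x i| ≤ t * u i := neg_le_of_abs_le hle2
      constructor
      · intro hi
        simp only [Pi.sub_apply, Pi.smul_apply, smul_eq_mul] at hi
        rcases lt_or_gt_of_ne hxi with hneg | hpos
        · exfalso
          have : |x i| = -x i := abs_of_neg hneg
          linarith
        · exact hpos
      · intro hi
        simp only [Pi.sub_apply, Pi.smul_apply, smul_eq_mul] at hi
        rcases lt_or_gt_of_ne hxi with hneg | hpos
        · exact hneg
        · exfalso
          have : |x i| = x i := abs_of_pos hpos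
          linarith
  refine ⟨x - t • u, ⟨t, rfl⟩, ?_, ?_, fun i => (key i).1, fun i => (key i).2⟩
  · intro h
    have := congrFun h j0
    simp [huj0, hj0] at this
  · constructor
    · intro i hi
      simp only [Function.mem_support] at hi ⊢
      intro hxi
      exact hi (by simp [hxi, hsupp i hxi])
    · intro hsub
      have hxp : x p ≠ 0 := fun h => hup (hsupp p h)
      have : (x - t • u) p ≠ 0 := hsub (Function.mem_support.mpr hxp)
      apply this
      simp [ht, div_mul_cancel₀ _ hup]


private lemma det_ratio_abs {m S : Type*} [Fintype m] [Fintype S]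
    (B : Matrix m S ℝ) (hB : B.IsTotallyUnimodular)
    (xS : S → ℝ) (hxS : ∀ s, xS s ≠ 0) (hBx : B.mulVec xS = 0)
    (hkerB : ∀ v : S → ℝ, B.mulVec v = 0 → ∃ c : ℝ, v = c • xS)
    (j0 : S) : ∀ s : S, |xS s| = |xS j0| := by
  classical
  have habs : ∀ r : ℝ, r ∈ Set.range (SignType.cast : SignType → ℝ) → r = 0 ∨ |r| = 1 := by
    rintro r ⟨sg, rfl⟩; cases sg <;> simp
  have hxS0 : xS ≠ 0 := fun h => hxS j0 (by rw [h]; rfl)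
  -- kernel of B is one-dimensional
  have hker_eq : LinearMap.ker B.mulVecLin = Submodule.span ℝ {xS} := by
    apply le_antisymm
    · intro v hv
      rw [LinearMap.mem_ker, Matrix.mulVecLin_apply] at hv
      obtain ⟨c, hc⟩ := hkerB v hv
      exact Submodule.mem_span_singleton.mpr ⟨c, hc.symm⟩
    · rw [Submodule.span_singleton_le_iff_mem, LinearMap.mem_ker, Matrix.mulVecLin_apply]
      exact hBx
  have hrank : B.rank + 1 = Fintype.card S := by
    have h1 := LinearMap.finrank_range_add_finrank_ker B.mulVecLin
    rw [hker_eq, finrank_span_singleton hxS0, Module.finrank_fintype_fun_eq_card] at h1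
    exact h1
  -- a basis of the row space made of rows
  obtain ⟨s, hs_sub, hs_span, hs_li⟩ := exists_linearIndependent ℝ (Set.range B)
  haveI : Fintype s := ((Set.finite_range B).subset hs_sub).fintype
  have hcard_s : s.toFinset.card = B.rank := by
    rw [← finrank_span_set_eq_card hs_li, hs_span, Matrix.rank_eq_finrank_span_row]; rfl
  have h_rr : ∀ v : s, ∃ r : m, B r = v.val := fun v => hs_sub v.2
  choose rr hrr using h_rr
  have cardT : Fintype.card {i : S // i ≠ j0} = Fintype.card S - 1 := by
    simp [ne_eq, Fintype.card_subtype_compl, Fintype.card_subtype_eq]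
  have e : {i : S // i ≠ j0} ≃ s := by
    apply Fintype.equivOfCardEq
    rw [cardT, ← Set.toFinset_card, hcard_s]
    omega
  set f : {i : S // i ≠ j0} → m := fun t => rr (e t) with hf
  set D : Matrix {i : S // i ≠ j0} {i : S // i ≠ j0} ℝ :=
    B.submatrix f Subtype.val with hD
  -- sum helper
  have hsumT : ∀ h : S → ℝ, h j0 = 0 → ∑ i : S, h i = ∑ t : {i : S // i ≠ j0}, h t.val := by
    intro h h0
    rw [← Finset.sum_erase_add Finset.univ h (Finset.mem_univ j0), h0, add_zero]
    exact Finset.sum_subtype (Finset.univ.erase j0) (by simp) h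
  -- D has trivial kernel
  have hDker : ∀ v : {i : S // i ≠ j0} → ℝ, D.mulVec v = 0 → v = 0 := by
    intro v hv
    set vS : S → ℝ := fun i => if h : i = j0 then 0 else v ⟨i, h⟩ with hvS
    have hvS0 : vS j0 = 0 := by simp [hvS]
    have hvST : ∀ t : {i : S // i ≠ j0}, vS t.val = v t := by
      intro t
      simp [hvS, t.prop]
    have hmem : ∀ u ∈ s, (u : S → ℝ) ⬝ᵥ vS = 0 := by
      intro u hu
      obtain ⟨t, ht⟩ : ∃ t, B (f t) = u := ⟨e.symm ⟨u, hu⟩, by simp [hf, hrr]⟩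
      rw [← ht]
      have hsum := hsumT (fun i => B (f t) i * vS i) (by show B (f t) j0 * vS j0 = 0; rw [hvS0, mul_zero])
      calc (B (f t) : S → ℝ) ⬝ᵥ vS = ∑ i : S, B (f t) i * vS i := rfl
        _ = ∑ t' : {i : S // i ≠ j0}, B (f t) t'.val * vS t'.val := hsum
        _ = ∑ t' : {i : S // i ≠ j0}, D t t' * v t' := by
              refine Finset.sum_congr rfl fun t' _ => ?_
              rw [hvST t']; rfl
        _ = D.mulVec v t := rfl
        _ = 0 := by rw [hv]; rfl
    have hrow : ∀ r : m, (B r : S → ℝ) ⬝ᵥ vS = 0 := by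
      intro r
      have hrm : B r ∈ Submodule.span ℝ s := by
        rw [hs_span]; exact Submodule.subset_span (Set.mem_range_self r)
      let φ : (S → ℝ) →ₗ[ℝ] ℝ :=
        { toFun := fun u => u ⬝ᵥ vS
          map_add' := fun a b => add_dotProduct a b vS
          map_smul' := fun c a => smul_dotProduct c a vS }
      have hle : Submodule.span ℝ s ≤ LinearMap.ker φ :=
        Submodule.span_le.mpr (fun u hu => hmem u hu)
      exact hle hrm
    have hBvS : B.mulVec vS = 0 := by
      ext r; simpa [Matrix.mulVec] using hrow r
    obtain ⟨c, hc⟩ := hkerB vS hBvS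
    have hc0 : c = 0 := by
      have h := congrFun hc j0
      rw [hvS0] at h
      simp only [Pi.smul_apply, smul_eq_mul] at h
      rcases mul_eq_zero.mp h.symm with h' | h'
      · exact h'
      · exact absurd h' (hxS j0)
    funext t
    rw [← hvST t, hc, hc0]
    simp
  have detD : D.det ≠ 0 := by
    intro h0
    obtain ⟨v, hv0, hv⟩ := Matrix.exists_mulVec_eq_zero_iff.mpr h0
    exact hv0 (hDker v hv)
  have detD1 : |D.det| = 1 := by
    rcases habs D.det ((Matrix.isTotallyUnimodular_iff_fintype B).mp hB _ f Subtype.val) with h | h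
    · exact absurd h detD
    · exact h
  set xT : {i : S // i ≠ j0} → ℝ := fun t => xS t.val with hxT
  set colj : {i : S // i ≠ j0} → ℝ := fun t => B (f t) j0 with hcolj
  have hDx : D.mulVec xT = (-(xS j0)) • colj := by
    funext t
    have h0 : (B.mulVec xS) (f t) = 0 := by rw [hBx]; rfl
    have hsplit := Finset.sum_erase_add Finset.univ (fun i => B (f t) i * xS i)
      (Finset.mem_univ j0)
    have herase : ∑ i ∈ Finset.univ.erase j0, B (f t) i * xS i
        = ∑ t' : {i : S // i ≠ j0}, B (f t) t'.val * xS t'.val :=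
      Finset.sum_subtype (Finset.univ.erase j0) (by simp) _
    have hmv : (B.mulVec xS) (f t) = ∑ i : S, B (f t) i * xS i := rfl
    have hkey : ∑ t' : {i : S // i ≠ j0}, B (f t) t'.val * xS t'.val + B (f t) j0 * xS j0
        = 0 := by
      rw [← herase]
      rw [← hmv] at hsplit
      rw [hsplit, h0]
    have hDxt : D.mulVec xT t = ∑ t' : {i : S // i ≠ j0}, B (f t) t'.val * xS t'.val := rfl
    rw [Pi.smul_apply, smul_eq_mul, hDxt]
    show ∑ t' : {i : S // i ≠ j0}, B (f t) t'.val * xS t'.val = -xS j0 * B (f t) j0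
    linarith [hkey]
  have cram : Matrix.cramer D (D.mulVec xT) = D.det • xT := by
    have h1 := Matrix.mulVec_cramer D (D.mulVec xT)
    have h2 : D.mulVec (Matrix.cramer D (D.mulVec xT) - D.det • xT) = 0 := by
      rw [Matrix.mulVec_sub, h1, Matrix.mulVec_smul, sub_self]
    have h3 := hDker _ h2
    rwa [sub_eq_zero] at h3
  intro sS
  by_cases hs0 : sS = j0
  · rw [hs0]
  · set t : {i : S // i ≠ j0} := ⟨sS, hs0⟩ with htdef
    have hct := congrFun cram t
    rw [Matrix.cramer_apply, hDx, Matrix.det_updateCol_smul] at hct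
    have hupdate : D.updateCol t colj
        = B.submatrix f (Function.update (Subtype.val : {i : S // i ≠ j0} → S) t j0) := by
      ext r t'
      by_cases h : t' = t
      · subst h; simp [Matrix.updateCol_apply, Function.update_apply, hcolj, hD]
      · simp [Matrix.updateCol_apply, Function.update_apply, h, hD]
    have hdet2 := habs _ ((Matrix.isTotallyUnimodular_iff_fintype B).mp hB _ f
      (Function.update (Subtype.val : {i : S // i ≠ j0} → S) t j0))
    rw [← hupdate] at hdet2
    have hxTt : xT t ≠ 0 := hxS sS
    have hctRHS : (D.det • xT) t = D.det * xT t := rfl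
    rw [hctRHS] at hct
    rcases hdet2 with h | h
    · exfalso
      rw [h, mul_zero] at hct
      exact mul_ne_zero detD hxTt hct.symm
    · have habs_eq := congrArg abs hct
      rw [abs_mul, abs_mul, abs_neg, h, detD1, mul_one, one_mul] at habs_eq
      exact habs_eq.symm

private lemma minimal_abs {m n : Type*} [Fintype m] [Fintype n]
    (A : Matrix m n ℝ) (hA : A.IsTotallyUnimodular) {x : n → ℝ}
    (hx : A.mulVec x = 0)
    (hker : ∀ w : n → ℝ, A.mulVec w = 0 → (∀ i, x i = 0 → w i = 0) → ∃ c : ℝ, w = c • x)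
    {j0 : n} (hj0 : x j0 ≠ 0) :
    ∀ i : n, x i = 0 ∨ |x i| = |x j0| := by
  classical
  set B : Matrix m {i : n // x i ≠ 0} ℝ := A.submatrix id Subtype.val with hBdef
  have hBtu : B.IsTotallyUnimodular := hA.submatrix id Subtype.val
  set xS : {i : n // x i ≠ 0} → ℝ := fun s => x s.val with hxSdef
  set ext : ({i : n // x i ≠ 0} → ℝ) → (n → ℝ) :=
    fun v i => if h : x i ≠ 0 then v ⟨i, h⟩ else 0 with hextdef
  have hsumS : ∀ h : n → ℝ, (∀ i, x i = 0 → h i = 0) →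
      ∑ i : n, h i = ∑ s : {i : n // x i ≠ 0}, h s.val := by
    intro h h0
    rw [← Finset.sum_filter_of_ne (p := fun i => x i ≠ 0)
      (fun i _ hne hxi => hne (h0 i hxi))]
    exact Finset.sum_subtype _ (by simp) h
  have hextA : ∀ v, A.mulVec (ext v) = B.mulVec v := by
    intro v
    funext r
    have hz : ∀ i, x i = 0 → A r i * ext v i = 0 := by
      intro i hi; simp [hextdef, hi]
    calc A.mulVec (ext v) r = ∑ i : n, A r i * ext v i := rfl
      _ = ∑ s : {i : n // x i ≠ 0}, A r s.val * ext v s.val := hsumS _ hz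
      _ = ∑ s : {i : n // x i ≠ 0}, B r s * v s := by
          refine Finset.sum_congr rfl fun s _ => ?_
          simp [hextdef, hBdef, s.prop]
      _ = B.mulVec v r := rfl
  have hxe : ext xS = x := by
    funext i
    by_cases h : x i = 0
    · simp [hextdef, h]
    · simp [hextdef, h, hxSdef]
  have hBx : B.mulVec xS = 0 := by rw [← hextA, hxe, hx]
  have hkerB : ∀ v, B.mulVec v = 0 → ∃ c : ℝ, v = c • xS := by
    intro v hv
    have h1 : A.mulVec (ext v) = 0 := by rw [hextA, hv]
    have h2 : ∀ i, x i = 0 → ext v i = 0 := fun i hi => by simp [hextdef, hi]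
    obtain ⟨c, hc⟩ := hker (ext v) h1 h2
    refine ⟨c, funext fun s => ?_⟩
    have h3 := congrFun hc s.val
    simpa [hextdef, s.prop, hxSdef] using h3
  intro i
  by_cases hi : x i = 0
  · exact Or.inl hi
  · exact Or.inr (det_ratio_abs B hBtu xS (fun s => s.prop) hBx hkerB ⟨j0, hj0⟩ ⟨i, hi⟩)

private lemma tu_aux {m n : Type*} [Fintype m] [Fintype n]
    (A : Matrix m n ℝ) (hA : A.IsTotallyUnimodular) :
    ∀ (N : ℕ) (x : n → ℝ), (Function.support x).ncard ≤ N → A.mulVec x = 0 → x ≠ 0 →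
    ∃ x' : n → ℝ, x' ≠ 0 ∧ (∀ i, x' i ∈ ({-1, 0, 1} : Set ℝ)) ∧
      A.mulVec x' = 0 ∧
      (∀ i, 0 < x' i → 0 < x i) ∧ (∀ i, x' i < 0 → x i < 0) := by
  classical
  intro N
  induction N with
  | zero =>
    intro x hN hx hx0
    exfalso
    obtain ⟨i, hi⟩ := Function.ne_iff.mp hx0
    have hmem : i ∈ Function.support x := by simpa using hi
    have hpos : 0 < (Function.support x).ncard :=
      (Set.ncard_pos (Set.toFinite _)).mpr ⟨i, hmem⟩
    omega
  | succ N ih =>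
    intro x hN hx hx0
    by_cases hmin : ∃ z : n → ℝ, z ≠ 0 ∧ A.mulVec z = 0 ∧
        Function.support z ⊂ Function.support x ∧
        (∀ i, 0 < z i → 0 < x i) ∧ (∀ i, z i < 0 → x i < 0)
    · obtain ⟨z, hz0, hzA, hzs, hzp, hzn⟩ := hmin
      have hcard : (Function.support z).ncard ≤ N := by
        have := Set.ncard_lt_ncard hzs (Set.toFinite _)
        omega
      obtain ⟨x', h1, h2, h3, h4, h5⟩ := ih z hcard hzA hz0
      exact ⟨x', h1, h2, h3,
        fun i hi => hzp i (h4 i hi), fun i hi => hzn i (h5 i hi)⟩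
    · obtain ⟨j0, hj0'⟩ := Function.ne_iff.mp hx0
      have hj0 : x j0 ≠ 0 := by simpa using hj0'
      have hker : ∀ w : n → ℝ, A.mulVec w = 0 → (∀ i, x i = 0 → w i = 0) →
          ∃ c : ℝ, w = c • x := by
        intro w hw hws
        set u : n → ℝ := w - (w j0 / x j0) • x with hu
        by_cases hu0 : u = 0
        · refine ⟨w j0 / x j0, ?_⟩
          have := sub_eq_zero.mp (hu ▸ hu0)
          exact this
        · exfalso
          have hAu : A.mulVec u = 0 := by
            rw [hu, Matrix.mulVec_sub, Matrix.mulVec_smul, hw, hx]; simp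
          have husupp : ∀ i, x i = 0 → u i = 0 := by
            intro i hi; simp [hu, hi, hws i hi]
          have huj0 : u j0 = 0 := by
            simp [hu, div_mul_cancel₀ _ hj0]
          obtain ⟨y, ⟨t, hyt⟩, hy0, hysupp, hyp, hyn⟩ := shrink_supp hu0 husupp hj0 huj0
          have hAy : A.mulVec y = 0 := by
            rw [hyt, Matrix.mulVec_sub, Matrix.mulVec_smul, hAu, hx]; simp
          exact hmin ⟨y, hy0, hAy, hysupp, hyp, hyn⟩
      have habs := minimal_abs A hA hx hker hj0
      have hcpos : (0:ℝ) < |x j0|⁻¹ := inv_pos.mpr (abs_pos.mpr hj0)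
      refine ⟨|x j0|⁻¹ • x, ?_, ?_, ?_, ?_, ?_⟩
      · intro h
        have := congrFun h j0
        simp only [Pi.smul_apply, smul_eq_mul, Pi.zero_apply] at this
        exact hj0 (by
          rcases mul_eq_zero.mp this with h' | h'
          · exact absurd h' (ne_of_gt hcpos)
          · exact h')
      · intro i
        rcases habs i with h | h
        · simp [h]
        · have : |(|x j0|⁻¹ • x) i| = 1 := by
            simp only [Pi.smul_apply, smul_eq_mul, abs_mul, abs_inv, abs_abs, h]
            exact inv_mul_cancel₀ (abs_ne_zero.mpr hj0)
          rcases (abs_eq (by norm_num : (0:ℝ) ≤ 1)).mp this with h' | h' <;> simp [h']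
      · rw [Matrix.mulVec_smul, hx, smul_zero]
      · intro i hi
        simp only [Pi.smul_apply, smul_eq_mul] at hi
        nlinarith [hi, hcpos]
      · intro i hi
        simp only [Pi.smul_apply, smul_eq_mul] at hi
        nlinarith [hi, hcpos]

/-- If `A` is totally unimodular and there is a nonzero real vector `x` with
`A x = 0`, then there is a nonzero vector `x'` with coordinates in `{-1, 0, 1}` such that
`A x' = 0`, whose support is contained in the support of `x` with matching signs. -/
theorem tu_sign_vector_of_kernel {m n : Type*} [Fintype m] [Fintype n]
    (A : Matrix m n ℝ) (hA : A.IsTotallyUnimodular)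
    (x : n → ℝ) (hx : A.mulVec x = 0) (hx0 : x ≠ 0) :
    ∃ x' : n → ℝ, x' ≠ 0 ∧ (∀ i, x' i ∈ ({-1, 0, 1} : Set ℝ)) ∧
      A.mulVec x' = 0 ∧
      (∀ i, 0 < x' i → 0 < x i) ∧ (∀ i, x' i < 0 → x i < 0) :=
  tu_aux A hA (Function.support x).ncard x le_rfl hx hx0
end

section
/- Let a_1, ..., a_m be the columns of a totally unimodular matrix A. If sum_{i=1}^m λ_i a_i = 0 with real coefficients λ_i, not all zero, then there exists a minimal linearly dependent subset C of columns (a circuit) contained in the support of λ, together with signs ε_i ∈ {1,-1} for i ∈ C, such that sum_{i∈C} ε_i a_i = 0 and ε_i agrees with the sign of λ_i for each i ∈ C. -/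
open Finset Matrix Module

/-- A set of column indices of `A` is dependent if the corresponding columns are
linearly dependent. -/
def Matrix.ColDep {m n : Type*} (A : Matrix m n ℝ) (S : Finset n) : Prop :=
  ¬ LinearIndependent ℝ (fun i : S => A.transpose i.1)

/-- A circuit: a minimal linearly dependent set of column indices. -/
def Matrix.IsCircuit {m n : Type*} (A : Matrix m n ℝ) (C : Finset n) : Prop :=
  A.ColDep C ∧ ∀ S ⊂ C, ¬ A.ColDep S

lemma exists_invertible_rows {m : Type*} [Fintype m] {k : ℕ} (M : Matrix m (Fin k) ℝ)
    (h : LinearIndependent ℝ (fun q : Fin k => Mᵀ q)) :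
    ∃ r : Fin k → m, Function.Injective r ∧ (M.submatrix r id).det ≠ 0 := by
  classical
  have hrank : M.rank = k := by
    rw [Matrix.rank_eq_finrank_span_cols, show M.col = fun q => Mᵀ q from rfl, finrank_span_eq_card h]
    simp
  have hspan : Submodule.span ℝ (Set.range M) = ⊤ := by
    apply Submodule.eq_top_of_finrank_eq
    have := M.rank_eq_finrank_span_row
    rw [hrank] at this
    rw [finrank_fin_fun]; exact this.symm
  obtain ⟨s, hs_sub, hs_span, hs_ind⟩ := exists_linearIndependent ℝ (Set.range M)
  rw [hspan] at hs_span
  have hs_fin : s.Finite := (Set.finite_range M).subset hs_sub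
  have : Fintype s := hs_fin.fintype
  have hcard : Fintype.card s = k := by
    have h1 := finrank_span_set_eq_card hs_ind
    rw [hs_span] at h1
    rw [Set.toFinset_card] at h1
    simp [finrank_top] at h1
    rw [Set.ncard_eq_toFinset_card', Set.toFinset_card] at h1
    omega
  obtain e := Fintype.equivFinOfCardEq hcard
  have hchoice : ∀ q : Fin k, ∃ i : m, M i = (e.symm q : Fin k → ℝ) := by
    intro q
    exact hs_sub (e.symm q).2
  choose r hr using hchoice
  have hrow : ∀ q, (M.submatrix r id) q = (e.symm q : Fin k → ℝ) := by
    intro q; ext q'; simp [Matrix.submatrix_apply, ← hr q]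
  have hind : LinearIndependent ℝ (fun q => (M.submatrix r id) q) := by
    have hcomp := hs_ind.comp e.symm e.symm.injective
    have hf : (fun q => (M.submatrix r id) q) = Subtype.val ∘ e.symm := funext hrow
    rw [hf]; exact hcomp
  have hunit : IsUnit (M.submatrix r id) := Matrix.linearIndependent_rows_iff_isUnit.mp hind
  refine ⟨r, ?_, ((Matrix.isUnit_iff_isUnit_det _).mp hunit).ne_zero⟩
  intro a b hab
  have : (e.symm a : Fin k → ℝ) = (e.symm b : Fin k → ℝ) := by rw [← hr a, ← hr b, hab]
  exact e.symm.injective (Subtype.ext this)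

lemma circuit_abs_eq {m n : Type*} [Fintype m] [Fintype n] [DecidableEq n]
    (A : Matrix m n ℝ) (hA : A.IsTotallyUnimodular) {C : Finset n}
    (hC : A.IsCircuit C) (y : n → ℝ)
    (hys : ∀ i ∈ C, y i ≠ 0)
    (hdep : ∑ i ∈ C, y i • A.transpose i = 0)
    {j : n} (hj : j ∈ C) :
    ∀ i ∈ C, |y i| = |y j| := by
  classical
  set B : Finset n := C.erase j with hB
  have hBind : LinearIndependent ℝ (fun i : B => A.transpose i.1) := by
    by_contra hcon
    exact hC.2 B (Finset.erase_ssubset hj) hcon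
  set k := B.card with hk
  set c : Fin k → n := fun q => (B.equivFin.symm q : n) with hc
  have hcmem : ∀ q, c q ∈ B := fun q => (B.equivFin.symm q).2
  have hcinj : Function.Injective c := fun a b hab =>
    B.equivFin.symm.injective (Subtype.ext hab)
  have hcsurj : ∀ i ∈ B, ∃ q, c q = i := by
    intro i hi
    exact ⟨B.equivFin ⟨i, hi⟩, by simp [hc]⟩
  set M : Matrix m (Fin k) ℝ := A.submatrix id c with hM
  have hMind : LinearIndependent ℝ (fun q : Fin k => Mᵀ q) := by
    have := hBind.comp (fun q => (⟨c q, hcmem q⟩ : B))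
      (fun a b hab => hcinj (congrArg Subtype.val hab))
    exact this
  obtain ⟨r, hrinj, hdet⟩ := exists_invertible_rows M hMind
  set N : Matrix (Fin k) (Fin k) ℝ := M.submatrix r id with hN
  -- the linear system
  have hrow : ∀ p : Fin k, ∑ i ∈ C, y i * A (r p) i = 0 := by
    intro p
    have := congrFun hdep (r p)
    simpa using this
  have hmul : N.mulVec (fun q => y (c q)) = fun p => -(y j) * A (r p) j := by
    ext p
    have hsplit : y j * A (r p) j + ∑ i ∈ B, y i * A (r p) i = 0 := by
      have h0 := Finset.add_sum_erase C (fun i => y i * A (r p) i) hj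
      rw [hB]
      rw [h0]
      exact hrow p
    have hbij : ∑ q : Fin k, y (c q) * A (r p) (c q) = ∑ i ∈ B, y i * A (r p) i := by
      rw [← Finset.sum_coe_sort B (fun i => y i * A (r p) i)]
      exact Fintype.sum_equiv B.equivFin.symm _ _ (fun q => rfl)
    simp only [Matrix.mulVec, dotProduct, hN, hM, Matrix.submatrix_apply, id]
    calc ∑ q : Fin k, A (r p) (c q) * y (c q) = ∑ i ∈ B, y i * A (r p) i := by
          rw [← hbij]; exact Finset.sum_congr rfl (fun q _ => mul_comm _ _)
      _ = -(y j) * A (r p) j := by linarith [hsplit]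
  -- Cramer
  have hcram : ∀ q, N.det * y (c q) = -(y j) * (N.updateCol q (fun p => A (r p) j)).det := by
    intro q
    have h1 : N.adjugate.mulVec (N.mulVec (fun q => y (c q)))
        = N.adjugate.mulVec (fun p => -(y j) * A (r p) j) := by rw [hmul]
    rw [Matrix.mulVec_mulVec, Matrix.adjugate_mul, Matrix.smul_mulVec,
      Matrix.one_mulVec, ← Matrix.cramer_eq_adjugate_mulVec] at h1
    have h2 : (fun p => -(y j) * A (r p) j) = (-(y j)) • (fun p => A (r p) j) := by
      ext p; simp [smul_eq_mul]
    rw [h2, LinearMap.map_smul] at h1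
    have := congrFun h1 q
    simpa [Matrix.cramer_apply, smul_eq_mul] using this
  -- the updated matrix is a submatrix of A
  have hupd : ∀ q, N.updateCol q (fun p => A (r p) j)
      = A.submatrix r (Function.update c q j) := by
    intro q
    ext p p'
    by_cases hp : p' = q
    · subst hp; simp [Matrix.updateCol_apply, Function.update_apply]
    · simp [Matrix.updateCol_apply, Function.update_apply, hp, hN, hM]
  have hjB : j ∉ B := Finset.notMem_erase j C
  have hupdinj : ∀ q, Function.Injective (Function.update c q j) := by
    intro q a b hab
    by_cases ha : a = q <;> by_cases hb : b = q
    · rw [ha, hb]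
    · exfalso; rw [Function.update_apply, Function.update_apply, if_pos ha, if_neg hb] at hab
      exact hjB (hab ▸ hcmem b)
    · exfalso; rw [Function.update_apply, Function.update_apply, if_neg ha, if_pos hb] at hab
      exact hjB (hab ▸ hcmem a)
    · rw [Function.update_apply, Function.update_apply, if_neg ha, if_neg hb] at hab
      exact hcinj hab
  -- TU facts
  have habsN : |N.det| = 1 := by
    obtain ⟨s, hs⟩ := hA k r c hrinj hcinj
    have hNc : A.submatrix r c = N := by ext p q; simp [hN, hM]
    rw [hNc] at hs
    cases s with
    | zero => exact absurd hs.symm (by simpa using hdet)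
    | pos => rw [← hs]; norm_num
    | neg => rw [← hs]; norm_num
  have habsU : ∀ q, |(N.updateCol q (fun p => A (r p) j)).det| = 0 ∨
      |(N.updateCol q (fun p => A (r p) j)).det| = 1 := by
    intro q
    rw [hupd q]
    obtain ⟨s, hs⟩ := hA k r (Function.update c q j) hrinj (hupdinj q)
    cases s with
    | zero => left; rw [← hs]; norm_num
    | pos => right; rw [← hs]; norm_num
    | neg => right; rw [← hs]; norm_num
  -- conclude for i ∈ B
  have hBabs : ∀ q, |y (c q)| = |y j| := by
    intro q
    have h1 := hcram q
    have h2 := congrArg abs h1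
    rw [abs_mul, abs_mul, habsN, one_mul, abs_neg] at h2
    rcases habsU q with h3 | h3
    · rw [h3, mul_zero] at h2
      exact absurd h2 (abs_ne_zero.mpr (hys _ (Finset.mem_of_mem_erase (hcmem q))))
    · rw [h3, mul_one] at h2; exact h2
  intro i hi
  by_cases hij : i = j
  · rw [hij]
  · obtain ⟨q, hq⟩ := hcsurj i (Finset.mem_erase.mpr ⟨hij, hi⟩)
    rw [← hq]; exact hBabs q

/-- If `∑ λ_i a_i = 0` with the `λ_i` not all zero, where `a_i` are the columns
of a totally unimodular matrix, then there is a circuit `C` contained in the support of `λ`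
and signs `ε_i ∈ {1,-1}` on `C` with `∑_{i∈C} ε_i a_i = 0`, the sign `ε_i` agreeing with the
sign of `λ_i` for all `i ∈ C`. -/
theorem tu_circuit_in_support {m n : Type*} [Fintype m] [Fintype n]
    (A : Matrix m n ℝ) (hA : A.IsTotallyUnimodular)
    (lam : n → ℝ) (hdep : ∑ i, lam i • A.transpose i = 0) (hne : lam ≠ 0) :
    ∃ (C : Finset n) (ε : n → ℝ),
      A.IsCircuit C ∧
      (∀ i ∈ C, lam i ≠ 0) ∧
      (∀ i ∈ C, ε i = 1 ∨ ε i = -1) ∧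
      (∑ i ∈ C, ε i • A.transpose i) = 0 ∧
      (∀ i ∈ C, (ε i = 1 → 0 < lam i) ∧ (ε i = -1 → lam i < 0)) := by
  classical
  -- conformal vectors in the kernel of A
  set P : (n → ℝ) → Prop := fun y =>
    (∃ i, y i ≠ 0) ∧ (∑ i, y i • A.transpose i = 0) ∧ (∀ i, y i ≠ 0 → 0 < y i * lam i)
    with hP
  set supp : (n → ℝ) → Finset n := fun y => Finset.univ.filter (y · ≠ 0) with hsupp
  have hmemsupp : ∀ y i, i ∈ supp y ↔ y i ≠ 0 := by
    intro y i; simp [hsupp]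
  have hPlam : P lam := by
    refine ⟨?_, hdep, fun i hi => mul_self_pos.mpr hi⟩
    by_contra hcon
    push_neg at hcon
    exact hne (funext hcon)
  -- choose a conformal kernel vector of minimal support
  have hex : ∃ c : ℕ, ∃ y, P y ∧ (supp y).card = c := ⟨_, lam, hPlam, rfl⟩
  obtain ⟨y, hPy, hycard⟩ := Nat.find_spec hex
  have hmin : ∀ z, P z → Nat.find hex ≤ (supp z).card := by
    intro z hz
    exact Nat.find_min' hex ⟨z, hz, rfl⟩
  set C : Finset n := supp y with hC
  have hys : ∀ i ∈ C, y i ≠ 0 := fun i hi => (hmemsupp y i).mp hi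
  have hysum : ∑ i ∈ C, y i • A.transpose i = 0 := by
    rw [hC, hsupp]
    rw [Finset.sum_filter_of_ne (fun i _ hne0 => by
      intro h0; exact hne0 (by rw [h0, zero_smul]))]
    exact hPy.2.1
  have hCne : C.Nonempty := by
    obtain ⟨i, hi⟩ := hPy.1
    exact ⟨i, (hmemsupp y i).mpr hi⟩
  -- C is a circuit
  have hColDep : A.ColDep C := by
    intro hind
    obtain ⟨i0, hi0⟩ := hCne
    have hsum0 : ∑ i : C, y i.1 • A.transpose i.1 = 0 := by
      rw [Finset.univ_eq_attach, Finset.sum_attach C (fun i => y i • A.transpose i)]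
      exact hysum
    have := Fintype.linearIndependent_iff.mp hind (fun i => y i.1) hsum0 ⟨i0, hi0⟩
    exact hys i0 hi0 this
  have hmini : ∀ S ⊂ C, ¬ A.ColDep S := by
    intro S hS hdepS
    obtain ⟨g, hgsum, i0, hgi0⟩ := Fintype.not_linearIndependent_iff.mp hdepS
    set z : n → ℝ := fun i => if h : i ∈ S then g ⟨i, h⟩ else 0 with hz
    have hzS : ∀ i, z i ≠ 0 → i ∈ S := by
      intro i hi
      by_contra hc
      exact hi (by simp [hz, hc])
    have hzsum : ∑ i, z i • A.transpose i = 0 := by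
      rw [← Finset.sum_subset (Finset.subset_univ S) (fun x _ hx => by
        simp [hz, hx])]
      rw [← Finset.sum_attach S (fun i => z i • A.transpose i)]
      rw [← hgsum, Finset.univ_eq_attach]
      exact Finset.sum_congr rfl (fun i _ => by simp [hz, i.2])
    have hSC : S ⊆ C := hS.subset
    -- the pivot index j
    set T : Finset n := Finset.univ.filter (z · ≠ 0) with hT
    have hTmem : ∀ i, i ∈ T ↔ z i ≠ 0 := by intro i; simp [hT]
    have hTne : T.Nonempty := ⟨i0.1, (hTmem _).mpr (by simp [hz, i0.2]; exact hgi0)⟩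
    obtain ⟨j, hjT, hjmin⟩ := T.exists_min_image (fun i => |y i| / |z i|) hTne
    have hzj : z j ≠ 0 := (hTmem j).mp hjT
    have hjC : j ∈ C := hSC (hzS j hzj)
    have hyj : y j ≠ 0 := hys j hjC
    set t : ℝ := y j / z j with ht
    set y' : n → ℝ := fun i => y i - t * z i with hy'
    have key : ∀ i, z i ≠ 0 → |t| * |z i| ≤ |y i| := by
      intro i hzi
      have h1 := hjmin i ((hTmem i).mpr hzi)
      have h2 : |t| = |y j| / |z j| := by rw [ht, abs_div]
      have h3 : 0 < |z i| := abs_pos.mpr hzi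
      rw [← le_div_iff₀ h3, h2]
      exact h1
    -- y' is conformal
    have hzero_of : ∀ i, y i = 0 → y' i = 0 := by
      intro i h0
      have hzi : z i = 0 := by
        by_contra hc
        exact hys i (hSC (hzS i hc)) h0
      simp [hy', h0, hzi]
    have hsign : ∀ i, y' i ≠ 0 → 0 < y' i * lam i := by
      intro i hi
      by_cases hzi : z i = 0
      · have : y' i = y i := by simp [hy', hzi]
        rw [this] at hi ⊢
        exact hPy.2.2 i hi
      · have hyi : y i ≠ 0 := fun h0 => hi (hzero_of i h0)
        have h2 : t * (y i * z i) ≤ |t| * |z i| * |y i| := by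
          calc t * (y i * z i) ≤ |t * (y i * z i)| := le_abs_self _
            _ = |t| * |z i| * |y i| := by rw [abs_mul, abs_mul]; ring
        have h4 : |t| * |z i| * |y i| ≤ |y i| * |y i| :=
          mul_le_mul_of_nonneg_right (key i hzi) (abs_nonneg _)
        have h5 : |y i| * |y i| = y i * y i := abs_mul_abs_self _
        have h6 : 0 ≤ y i * y' i := by
          have : y i * y' i = y i * y i - t * (y i * z i) := by rw [hy']; ring
          rw [this]; linarith
        have h7 : 0 < y i * y' i :=
          lt_of_le_of_ne h6 (fun h => (mul_ne_zero hyi hi) h.symm)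
        have h8 : 0 < y i * lam i := hPy.2.2 i hyi
        nlinarith [mul_pos h7 h8, mul_self_pos.mpr hyi]
    -- y' is in the kernel
    have hy'sum : ∑ i, y' i • A.transpose i = 0 := by
      have : ∀ i, y' i • A.transpose i = y i • A.transpose i - t • (z i • A.transpose i) := by
        intro i; rw [hy', sub_smul, smul_smul]
      rw [Finset.sum_congr rfl (fun i _ => this i), Finset.sum_sub_distrib,
        ← Finset.smul_sum, hPy.2.1, hzsum, smul_zero, sub_zero]
    -- y' is nonzero
    obtain ⟨i1, hi1C, hi1S⟩ := Finset.exists_of_ssubset hS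
    have hy'ne : ∃ i, y' i ≠ 0 := by
      refine ⟨i1, ?_⟩
      have hzi1 : z i1 = 0 := by
        by_contra hc
        exact hi1S (hzS i1 hc)
      simp only [hy', hzi1, mul_zero, sub_zero]
      exact hys i1 hi1C
    have hPy' : P y' := ⟨hy'ne, hy'sum, hsign⟩
    -- support strictly decreases
    have hsub : supp y' ⊆ C.erase j := by
      intro i hi
      have hyi' : y' i ≠ 0 := (hmemsupp y' i).mp hi
      have hyi : y i ≠ 0 := fun h0 => hyi' (hzero_of i h0)
      refine Finset.mem_erase.mpr ⟨?_, (hmemsupp y i).mpr hyi⟩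
      intro hij
      apply hyi'
      rw [hij, hy']
      show y j - t * z j = 0
      rw [ht, div_mul_cancel₀ _ hzj, sub_self]
    have hcard : (supp y').card < C.card := by
      calc (supp y').card ≤ (C.erase j).card := Finset.card_le_card hsub
        _ < C.card := Finset.card_erase_lt_of_mem hjC
    have := hmin y' hPy'
    omega
  have hcirc : A.IsCircuit C := ⟨hColDep, hmini⟩
  -- the sign vector
  obtain ⟨j0, hj0⟩ := hCne
  have habs := circuit_abs_eq A hA hcirc y hys hysum hj0
  set a : ℝ := |y j0| with ha
  have hapos : 0 < a := abs_pos.mpr (hys j0 hj0)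
  refine ⟨C, fun i => y i / a, hcirc, ?_, ?_, ?_, ?_⟩
  · intro i hi
    have := hPy.2.2 i (hys i hi)
    intro h0
    rw [h0, mul_zero] at this
    exact lt_irrefl 0 this
  · intro i hi
    rcases (abs_eq (le_of_lt hapos)).mp (habs i hi) with h | h
    · left; show y i / a = 1; rw [h, div_self (ne_of_gt hapos)]
    · right; show y i / a = -1; rw [h, neg_div, div_self (ne_of_gt hapos)]
  · have : ∀ i ∈ C, (y i / a) • A.transpose i = a⁻¹ • (y i • A.transpose i) := by
      intro i _
      rw [div_eq_inv_mul, ← smul_smul]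
    rw [Finset.sum_congr rfl this, ← Finset.smul_sum, hysum, smul_zero]
  · intro i hi
    have hyl : 0 < y i * lam i := hPy.2.2 i (hys i hi)
    constructor
    · intro h1
      have : y i = a := by
        field_simp at h1
        linarith [h1]
      nlinarith
    · intro h1
      have : y i = -a := by
        rw [div_eq_iff (ne_of_gt hapos)] at h1
        linarith
      nlinarith
end

section
/- Let a_1, ..., a_m be the columns of a totally unimodular matrix, and suppose sum_{i=1}^m λ_i a_i = 0. Then there exist signed circuits C_1, ..., C_t (each C_j a minimal dependent set partitioned as C_j^+ ⊔ C_j^- with sum_{i∈C_j^+} a_i - sum_{i∈C_j^-} a_i = 0) and real coefficients ν_1, ..., ν_t such that for every index i, λ_i = sum_{j : i∈C_j^+} ν_j - sum_{j : i∈C_j^-} ν_j. -/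
open Finset

/-- A signed circuit: a circuit `C⁺ ⊔ C⁻` with `∑_{i∈C⁺} a_i - ∑_{i∈C⁻} a_i = 0`. -/
def Matrix.IsSignedCircuit {m n : Type*} [Fintype m] [DecidableEq n]
    (A : Matrix m n ℝ) (Cp Cm : Finset n) : Prop :=
  Disjoint Cp Cm ∧ A.IsCircuit (Cp ∪ Cm) ∧
    (∑ i ∈ Cp, A.transpose i) - (∑ i ∈ Cm, A.transpose i) = 0

section Aux
open Matrix
set_option linter.unusedSectionVars false

variable {m n : Type*} [Fintype m] [Fintype n] [DecidableEq n] {A : Matrix m n ℝ}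

lemma colDep_iff (S : Finset n) :
    A.ColDep S ↔ ∃ c : n → ℝ, (∀ i ∉ S, c i = 0) ∧ (∃ i, c i ≠ 0) ∧
      ∑ i, c i • A.transpose i = 0 := by
  classical
  rw [Matrix.ColDep, Fintype.not_linearIndependent_iff]
  constructor
  · rintro ⟨g, hsum, i, hi⟩
    refine ⟨fun j => if h : j ∈ S then g ⟨j, h⟩ else 0, fun j hj => dif_neg hj,
      ⟨i.1, by simpa [i.2] using hi⟩, ?_⟩
    rw [← Finset.sum_subset (Finset.subset_univ S) (by intro x _ hx; simp [hx])]
    rw [← hsum, ← Finset.sum_coe_sort S]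
    exact Finset.sum_congr rfl fun i _ => by simp [i.2]
  · rintro ⟨c, hc0, ⟨i, hi⟩, hsum⟩
    have hiS : i ∈ S := by by_contra h; exact hi (hc0 i h)
    refine ⟨fun j => c j.1, ?_, ⟨i, hiS⟩, hi⟩
    rw [Finset.sum_coe_sort S (fun j => c j • A.transpose j), ← hsum]
    exact (Finset.sum_subset (Finset.subset_univ S) (by intro x _ hx; simp [hc0 x hx]))

lemma circuit_exists (S : Finset n) (hS : A.ColDep S) : ∃ C ⊆ S, A.IsCircuit C := by
  classical
  obtain ⟨C, hC, hmin⟩ := Finset.exists_min_image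
    (S.powerset.filter (fun D => A.ColDep D)) Finset.card
    ⟨S, by simp [hS]⟩
  simp only [Finset.mem_filter, Finset.mem_powerset] at hC
  refine ⟨C, hC.1, hC.2, fun D hD hDdep => ?_⟩
  have h2 := hmin D (by
    simp only [Finset.mem_filter, Finset.mem_powerset]
    exact ⟨hD.subset.trans hC.1, hDdep⟩)
  exact absurd h2 (not_le_of_gt (Finset.card_lt_card hD))

set_option maxHeartbeats 800000 in
lemma exists_invertible_rows_s3 {B : Finset n}
    (hB : LinearIndependent ℝ (fun i : B => A.transpose i.1)) :
    ∃ r : B → m, IsUnit (Matrix.of (fun j i : B => A (r j) i.1)) := by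
  classical
  set N : Matrix m B ℝ := Matrix.of (fun r (i : B) => A r i.1) with hN
  have hcols : LinearIndependent ℝ (fun i : B => Nᵀ i) := hB
  have hinj : Function.Injective N.mulVec := Matrix.mulVec_injective_iff.2 hcols
  have hinj' : Function.Injective N.mulVecLin := by
    simpa [Matrix.coe_mulVecLin] using hinj
  have hrank : N.rank = Fintype.card B := by
    rw [Matrix.rank, LinearMap.finrank_range_of_inj hinj']
    simp [Module.finrank_pi]
  have hrankT : Nᵀ.rank = Fintype.card B := by rw [Matrix.rank_transpose]; exact hrank
  have htop : LinearMap.range Nᵀ.mulVecLin = ⊤ := by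
    apply Submodule.eq_top_of_finrank_eq
    show Module.finrank ℝ _ = _
    rw [show Module.finrank ℝ ↥(LinearMap.range Nᵀ.mulVecLin) = Nᵀ.rank from rfl,
      hrankT, Module.finrank_pi]
  have hspanrows : Submodule.span ℝ (Set.range (fun ρ : m => N ρ)) = ⊤ := by
    have := Matrix.range_mulVecLin Nᵀ
    rw [htop] at this
    exact this.symm
  obtain ⟨b, hbsub, hbspan, hbind⟩ :=
    exists_linearIndependent ℝ (Set.range (fun ρ : m => N ρ))
  haveI : Fintype b := (Set.Finite.subset (Set.finite_range _) hbsub).fintype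
  have bas : Module.Basis b ℝ (B → ℝ) := Module.Basis.mk hbind (by
    rw [Subtype.range_coe, hbspan, hspanrows])
  have hcard : Fintype.card b = Fintype.card B := by
    rw [← Module.finrank_eq_card_basis bas, Module.finrank_pi]
  have e : b ≃ B := Fintype.equivOfCardEq hcard
  have hch : ∀ v : b, ∃ ρ : m, N ρ = v.1 := fun v => hbsub v.2
  choose rr hrr using hch
  refine ⟨fun j => rr (e.symm j), ?_⟩
  rw [← Matrix.linearIndependent_rows_iff_isUnit]
  have : (fun j : B => Matrix.of (fun j i : B => A (rr (e.symm j)) i.1) j)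
      = fun j : B => ((e.symm j : b) : B → ℝ) := by
    funext j
    exact hrr (e.symm j)
  show LinearIndependent ℝ (fun j : B => Matrix.of (fun j i : B => A (rr (e.symm j)) i.1) j); rw [this]
  exact hbind.comp e.symm (Equiv.injective _)

lemma sign_mem {x : ℝ} (hx : x ∈ Set.range (SignType.cast : SignType → ℝ)) :
    x = 0 ∨ x = 1 ∨ x = -1 := by
  obtain ⟨s, rfl⟩ := hx
  cases s <;> simp

set_option maxHeartbeats 1600000 in
lemma circuit_sign (hA : A.IsTotallyUnimodular) {C : Finset n} (hC : A.IsCircuit C) :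
    ∃ χ : n → ℝ, (∀ i ∈ C, χ i = 1 ∨ χ i = -1) ∧ (∀ i ∉ C, χ i = 0) ∧
      ∑ i, χ i • A.transpose i = 0 := by
  classical
  obtain ⟨μ, hμ0, ⟨iw, hiw⟩, hμsum⟩ := (colDep_iff C).1 hC.1
  -- all entries of μ on C are nonzero
  have hμne : ∀ i ∈ C, μ i ≠ 0 := by
    intro i0 hi0 h0
    refine hC.2 (C.erase i0) (Finset.erase_ssubset hi0) ?_
    refine (colDep_iff _).2 ⟨μ, ?_, ⟨iw, hiw⟩, hμsum⟩
    intro i hi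
    by_cases h : i = i0
    · subst h; exact h0
    · exact hμ0 i (fun hc => hi (Finset.mem_erase.2 ⟨h, hc⟩))
  have hiwC : iw ∈ C := by by_contra h; exact hiw (hμ0 iw h)
  set i0 := iw
  set B : Finset n := C.erase i0 with hB
  have hBss : B ⊂ C := Finset.erase_ssubset hiwC
  have hBind : LinearIndependent ℝ (fun i : B => A.transpose i.1) :=
    not_not.1 (hC.2 B hBss)
  obtain ⟨r, hM⟩ := exists_invertible_rows_s3 hBind
  set M : Matrix B B ℝ := Matrix.of (fun j i : B => A (r j) i.1) with hMdef
  set x : B → ℝ := fun i => -(μ i.1) / μ i0 with hx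
  set v : B → ℝ := fun j => A (r j) i0 with hv
  have hμi0 : μ i0 ≠ 0 := hμne i0 hiwC
  -- row equations
  have hrow : ∀ ρ : m, ∑ i, μ i * A ρ i = 0 := by
    intro ρ
    have := congrFun hμsum ρ
    simpa [Finset.sum_apply, Matrix.transpose_apply] using this
  have heq : M *ᵥ x = v := by
    funext j
    have h1 : ∑ i ∈ C, μ i * A (r j) i = 0 := by
      rw [Finset.sum_subset (Finset.subset_univ C)
        (by intro t _ ht; rw [hμ0 t ht]; ring)]
      exact hrow (r j)
    have h2 : μ i0 * A (r j) i0 + ∑ i ∈ B, μ i * A (r j) i = 0 := by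
      have h2' := Finset.add_sum_erase C (fun i => μ i * A (r j) i) hiwC
      rw [hB]; rw [h2']; exact h1
    have h3 : (M *ᵥ x) j = ∑ i : B, A (r j) i.1 * (-(μ i.1) / μ i0) := by
      simp [Matrix.mulVec, dotProduct, hMdef, hx]
    rw [h3]
    have h4 : ∑ i : B, A (r j) i.1 * (-(μ i.1) / μ i0)
        = (∑ i ∈ B, μ i * A (r j) i) * (-1 / μ i0) := by
      rw [← Finset.sum_coe_sort B (fun i => μ i * A (r j) i), Finset.sum_mul]
      exact Finset.sum_congr rfl fun i _ => by ring
    rw [h4]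
    have h5 : ∑ i ∈ B, μ i * A (r j) i = -(μ i0 * A (r j) i0) := by linarith
    rw [h5, hv]
    field_simp
  -- Cramer
  have hdetM : M.det = 1 ∨ M.det = -1 := by
    have h1 := ((Matrix.isTotallyUnimodular_iff_fintype A).1 hA B r Subtype.val)
    have h2 : M.det ≠ 0 := by
      intro h
      exact (Matrix.isUnit_iff_isUnit_det M).1 hM |>.ne_zero (by rw [h])
    rcases sign_mem h1 with h | h | h
    · exact absurd h h2
    · exact Or.inl h
    · exact Or.inr h
  have hcram : M.det • x = Matrix.cramer M v := by
    have hinj : Function.Injective M.mulVec := by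
      haveI := hM.invertible
      exact Matrix.mulVec_injective_of_invertible M
    apply hinj
    rw [Matrix.mulVec_smul, heq, Matrix.mulVec_cramer]
  have hxval : ∀ i : B, x i = 1 ∨ x i = -1 := by
    intro i
    have hcv : Matrix.cramer M v i = 0 ∨ Matrix.cramer M v i = 1 ∨
        Matrix.cramer M v i = -1 := by
      rw [Matrix.cramer_apply]
      have hupdate : M.updateCol i v
          = A.submatrix r (fun l : B => if l = i then i0 else l.1) := by
        funext j l
        rw [Matrix.updateCol_apply]
        by_cases h : l = i <;> simp [h, hMdef, hv, Matrix.submatrix_apply]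
      rw [hupdate]
      exact sign_mem ((Matrix.isTotallyUnimodular_iff_fintype A).1 hA B r _)
    have hxi : M.det * x i = Matrix.cramer M v i := congrFun hcram i
    have hxne : x i ≠ 0 := by
      rw [hx]
      have := hμne i.1 (Finset.mem_of_mem_erase i.2)
      simp only [neg_div, ne_eq, neg_eq_zero, div_eq_zero_iff, not_or]
      exact ⟨this, hμi0⟩
    rcases hdetM with h | h <;> rcases hcv with h' | h' | h' <;>
      rw [h, h'] at hxi <;> first
      | (exact absurd (by linarith : x i = 0) hxne)
      | (exact Or.inl (by linarith))
      | (exact Or.inr (by linarith))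
  -- build χ
  refine ⟨fun i => μ i / μ i0, ?_, ?_, ?_⟩
  · intro i hi
    by_cases h : i = i0
    · subst h; left; exact div_self hμi0
    · have hiB : i ∈ B := Finset.mem_erase.2 ⟨h, hi⟩
      rcases hxval ⟨i, hiB⟩ with hx1 | hx1 <;> rw [hx] at hx1 <;>
        simp only [neg_div] at hx1
      · right; linarith
      · left; linarith
  · intro i hi; show μ i / μ i0 = 0; rw [hμ0 i hi, zero_div]
  · have : ∀ i : n, (μ i / μ i0) • A.transpose i = (μ i0)⁻¹ • (μ i • A.transpose i) := by
      intro i; rw [smul_smul]; congr 1; field_simp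
    simp_rw [this, ← Finset.smul_sum, hμsum, smul_zero]

set_option maxHeartbeats 1600000 in
lemma decompose_aux (hA : A.IsTotallyUnimodular) :
    ∀ (N : ℕ) (lam : n → ℝ), (Finset.univ.filter fun i => lam i ≠ 0).card ≤ N →
    ∑ i, lam i • A.transpose i = 0 →
    ∃ (t : ℕ) (Cp Cm : Fin t → Finset n) (ν : Fin t → ℝ),
      (∀ j, A.IsSignedCircuit (Cp j) (Cm j)) ∧
      ∀ i, lam i =
        (∑ j ∈ Finset.univ.filter (fun j => i ∈ Cp j), ν j) -
        (∑ j ∈ Finset.univ.filter (fun j => i ∈ Cm j), ν j) := by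
  classical
  intro N
  induction N with
  | zero =>
    intro lam hcard _
    have hlam : ∀ i, lam i = 0 := by
      intro i
      by_contra h
      have : i ∈ Finset.univ.filter fun i => lam i ≠ 0 := by simp [h]
      have := Finset.card_pos.2 ⟨i, this⟩
      omega
    exact ⟨0, Fin.elim0, Fin.elim0, Fin.elim0, fun j => j.elim0,
      fun i => by simp [hlam i]⟩
  | succ N ih =>
    intro lam hcard hsum
    by_cases hz : ∀ i, lam i = 0
    · exact ⟨0, Fin.elim0, Fin.elim0, Fin.elim0, fun j => j.elim0,
        fun i => by simp [hz i]⟩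
    push_neg at hz
    set S : Finset n := Finset.univ.filter fun i => lam i ≠ 0 with hS
    have hSdep : A.ColDep S := by
      refine (colDep_iff S).2 ⟨lam, ?_, hz, hsum⟩
      intro i hi
      by_contra h
      exact hi (by simp [hS, h])
    obtain ⟨C, hCS, hCcirc⟩ := circuit_exists S hSdep
    obtain ⟨χ, hχpm, hχ0, hχsum⟩ := circuit_sign hA hCcirc
    -- C is nonempty
    have hCne : C.Nonempty := by
      rcases Finset.eq_empty_or_nonempty C with h | h
      · exfalso
        apply hCcirc.1
        subst h
        exact linearIndependent_empty_type
      · exact h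
    obtain ⟨i0, hi0⟩ := hCne
    have hχi0 : χ i0 = 1 ∨ χ i0 = -1 := hχpm i0 hi0
    have hχi0sq : χ i0 * χ i0 = 1 := by rcases hχi0 with h | h <;> rw [h] <;> ring
    set ν0 : ℝ := lam i0 * χ i0 with hν0
    set lam' : n → ℝ := fun i => lam i - ν0 * χ i with hlam'
    have hlam'sum : ∑ i, lam' i • A.transpose i = 0 := by
      have : ∀ i, lam' i • A.transpose i
          = lam i • A.transpose i - ν0 • (χ i • A.transpose i) := by
        intro i; rw [hlam']; simp [sub_smul, smul_smul]
      simp_rw [this, Finset.sum_sub_distrib, hsum, ← Finset.smul_sum, hχsum,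
        smul_zero, sub_zero]
    have hsupp : (Finset.univ.filter fun i => lam' i ≠ 0) ⊆ S.erase i0 := by
      intro i hi
      simp only [Finset.mem_filter, Finset.mem_univ, true_and] at hi
      rw [Finset.mem_erase]
      constructor
      · rintro rfl
        apply hi
        rw [hlam', hν0]
        simp only
        rw [mul_assoc, hχi0sq, mul_one, sub_self]
      · by_contra h
        apply hi
        have h1 : lam i = 0 := by
          by_contra h2
          exact h (by simp [hS, h2])
        have h2 : χ i = 0 := hχ0 i (fun hc => h (hCS hc))
        rw [hlam']
        simp [h1, h2]
    have hi0S : i0 ∈ S := hCS hi0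
    have hcard' : (Finset.univ.filter fun i => lam' i ≠ 0).card ≤ N := by
      have h1 := Finset.card_le_card hsupp
      have h2 : (S.erase i0).card = S.card - 1 := Finset.card_erase_of_mem hi0S
      have h3 : 1 ≤ S.card := Finset.card_pos.2 ⟨i0, hi0S⟩
      omega
    obtain ⟨t, Cp, Cm, ν, hsc, hform⟩ := ih lam' hcard' hlam'sum
    set Cp0 : Finset n := C.filter (fun i => χ i = 1) with hCp0
    set Cm0 : Finset n := C.filter (fun i => χ i = -1) with hCm0
    have hCp0C : Cp0 ⊆ C := Finset.filter_subset _ _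
    have hCm0C : Cm0 ⊆ C := Finset.filter_subset _ _
    have hunion : Cp0 ∪ Cm0 = C := by
      apply Finset.Subset.antisymm (Finset.union_subset hCp0C hCm0C)
      intro i hi
      rcases hχpm i hi with h | h
      · exact Finset.mem_union_left _ (Finset.mem_filter.2 ⟨hi, h⟩)
      · exact Finset.mem_union_right _ (Finset.mem_filter.2 ⟨hi, h⟩)
    have hdisj : Disjoint Cp0 Cm0 := by
      rw [Finset.disjoint_left]
      intro i h1 h2
      have e1 := (Finset.mem_filter.1 h1).2
      have e2 := (Finset.mem_filter.1 h2).2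
      rw [e1] at e2
      norm_num at e2
    have hsc0 : A.IsSignedCircuit Cp0 Cm0 := by
      refine ⟨hdisj, hunion ▸ hCcirc, ?_⟩
      have key : (∑ i ∈ Cp0, A.transpose i) - (∑ i ∈ Cm0, A.transpose i)
          = ∑ i ∈ C, χ i • A.transpose i := by
        rw [← Finset.sum_filter_add_sum_filter_not C (fun i => χ i = 1)
          (fun i => χ i • A.transpose i)]
        have e1 : ∑ i ∈ Cp0, χ i • A.transpose i = ∑ i ∈ Cp0, A.transpose i := by
          apply Finset.sum_congr rfl
          intro i hi
          rw [(Finset.mem_filter.1 hi).2, one_smul]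
        have e2 : C.filter (fun i => ¬ χ i = 1) = Cm0 := by
          apply Finset.filter_congr
          intro i hi
          rcases hχpm i hi with h | h <;> norm_num [h]
        have e3 : ∑ i ∈ Cm0, χ i • A.transpose i = -∑ i ∈ Cm0, A.transpose i := by
          refine Eq.trans ?_ (Finset.sum_neg_distrib (s := Cm0) (f := fun i => A.transpose i))
          apply Finset.sum_congr rfl
          intro i hi
          rw [(Finset.mem_filter.1 hi).2]
          simp
        rw [e2, e1, e3]
        ring
      rw [key, Finset.sum_subset (Finset.subset_univ C)
        (by intro i _ hi; rw [hχ0 i hi, zero_smul])]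
      exact hχsum
    refine ⟨t + 1, Fin.cons Cp0 Cp, Fin.cons Cm0 Cm, Fin.cons ν0 ν, ?_, ?_⟩
    · intro j
      refine Fin.cases ?_ ?_ j
      · simpa using hsc0
      · intro k; simpa using hsc k
    · intro i
      have hrw : ∀ (D : Fin (t+1) → Finset n) (w : Fin (t+1) → ℝ),
          ∑ j ∈ Finset.univ.filter (fun j => i ∈ D j), w j
            = ∑ j : Fin (t+1), if i ∈ D j then w j else 0 :=
        fun D w => Finset.sum_filter _ _
      rw [hrw, hrw, Fin.sum_univ_succ, Fin.sum_univ_succ]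
      simp only [Fin.cons_zero, Fin.cons_succ]
      have hrw2 : ∀ (D : Fin t → Finset n) (w : Fin t → ℝ),
          ∑ j : Fin t, (if i ∈ D j then w j else 0)
            = ∑ j ∈ Finset.univ.filter (fun j => i ∈ D j), w j :=
        fun D w => (Finset.sum_filter _ _).symm
      rw [hrw2, hrw2]
      have hlam'i : lam i = lam' i + ν0 * χ i := by rw [hlam']; ring
      rw [hlam'i, hform i]
      by_cases hiC : i ∈ C
      · rcases hχpm i hiC with h | h
        · have h1 : i ∈ Cp0 := Finset.mem_filter.2 ⟨hiC, h⟩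
          have h2 : i ∉ Cm0 := fun hc => by
            have := (Finset.mem_filter.1 hc).2; rw [h] at this; norm_num at this
          rw [if_pos h1, if_neg h2, h]
          ring
        · have h1 : i ∈ Cm0 := Finset.mem_filter.2 ⟨hiC, h⟩
          have h2 : i ∉ Cp0 := fun hc => by
            have := (Finset.mem_filter.1 hc).2; rw [h] at this; norm_num at this
          rw [if_pos h1, if_neg h2, h]
          ring
      · have h1 : i ∉ Cp0 := fun hc => hiC (hCp0C hc)
        have h2 : i ∉ Cm0 := fun hc => hiC (hCm0C hc)
        rw [if_neg h1, if_neg h2, hχ0 i hiC]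
        ring

end Aux

/-- Any linear dependence `∑ λ_i a_i = 0` among the columns of a totally
unimodular matrix decomposes as a combination of signed circuits: there are signed circuits
`C_1, …, C_t` and coefficients `ν_1, …, ν_t` with
`λ_i = ∑_{j : i ∈ C_j⁺} ν_j - ∑_{j : i ∈ C_j⁻} ν_j` for every `i`. -/
theorem tu_dependence_decomposes_into_signed_circuits {m n : Type*}
    [Fintype m] [Fintype n] [DecidableEq n]
    (A : Matrix m n ℝ) (hA : A.IsTotallyUnimodular)
    (lam : n → ℝ) (hdep : ∑ i, lam i • A.transpose i = 0) :
    ∃ (t : ℕ) (Cp Cm : Fin t → Finset n) (ν : Fin t → ℝ),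
      (∀ j, A.IsSignedCircuit (Cp j) (Cm j)) ∧
      ∀ i, lam i =
        (∑ j ∈ Finset.univ.filter (fun j => i ∈ Cp j), ν j) -
        (∑ j ∈ Finset.univ.filter (fun j => i ∈ Cm j), ν j) := by
  classical
  exact decompose_aux hA (Finset.univ.filter fun i => lam i ≠ 0).card lam le_rfl hdep
end

section
/- Let A and A' be two totally unimodular matrices whose columns a_1,...,a_m and a'_1,...,a'_m realize the same regular oriented matroid (i.e., have the same signed circuits). Then the map sending sum λ_i a_i (with λ_i ≥ 0, sum λ_i = 1) to sum λ_i a'_i is a well-defined bijection from the polytope conv{a_1,...,a_m} to conv{a'_1,...,a'_m}. -/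
open Finset

set_option linter.unusedSectionVars false

section Aux

variable {k n : Type*} [Fintype k] [Fintype n] [DecidableEq n]

lemma coldep_iff' (A : Matrix k n ℝ) (S : Finset n) :
    A.ColDep S ↔ ∃ c : n → ℝ, (∀ i, i ∉ S → c i = 0) ∧
      (∑ i, c i • A.transpose i = 0) ∧ c ≠ 0 := by
  classical
  rw [Matrix.ColDep, Fintype.not_linearIndependent_iff]
  constructor
  · rintro ⟨g, hg, i, hi⟩
    refine ⟨fun i => if h : i ∈ S then g ⟨i, h⟩ else 0, fun i hi => dif_neg hi, ?_, ?_⟩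
    · have h1 : ∑ i ∈ S, (if h : i ∈ S then g ⟨i, h⟩ else 0) • A.transpose i
          = ∑ i, (if h : i ∈ S then g ⟨i, h⟩ else 0) • A.transpose i := by
        apply Finset.sum_subset S.subset_univ
        intro x _ hx
        rw [dif_neg hx, zero_smul]
      rw [← h1, ← Finset.sum_attach S (fun i => (if h : i ∈ S then g ⟨i, h⟩ else 0) • A.transpose i)]
      simpa using hg
    · intro hc
      apply hi
      have := congrFun hc i.1
      simpa [i.2] using this
  · rintro ⟨c, hc0, hcsum, hcne⟩
    refine ⟨fun i => c i.1, ?_, ?_⟩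
    · have h1 : ∑ i ∈ S.attach, c i.1 • A.transpose i.1 = ∑ i ∈ S, c i • A.transpose i :=
        Finset.sum_attach S (fun i => c i • A.transpose i)
      have h2 : ∑ i ∈ S, c i • A.transpose i = ∑ i, c i • A.transpose i := by
        apply Finset.sum_subset S.subset_univ
        intro x _ hx
        rw [hc0 x hx, zero_smul]
      simpa using h1.trans (h2.trans hcsum)
    · obtain ⟨i, hi⟩ := Function.ne_iff.mp hcne
      have hiS : i ∈ S := by by_contra h; exact hi (hc0 i h)
      exact ⟨⟨i, hiS⟩, hi⟩

lemma exists_circuit_subset (A : Matrix k n ℝ) (S : Finset n) (h : A.ColDep S) :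
    ∃ C ⊆ S, A.IsCircuit C := by
  classical
  induction S using Finset.strongInductionOn with
  | _ S ih =>
    by_cases hmin : ∀ T ⊂ S, ¬ A.ColDep T
    · exact ⟨S, le_refl _, h, hmin⟩
    · push_neg at hmin
      obtain ⟨T, hT, hdep⟩ := hmin
      obtain ⟨C, hC, hcir⟩ := ih T hT hdep
      exact ⟨C, hC.trans hT.subset, hcir⟩

lemma circuit_nonempty (A : Matrix k n ℝ) {C : Finset n} (hC : A.IsCircuit C) :
    C.Nonempty := by
  rcases C.eq_empty_or_nonempty with h | h
  · exfalso
    apply hC.1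
    haveI : IsEmpty ((∅ : Finset n) : Finset n) := ⟨fun i => (Finset.notMem_empty i.1 i.2)⟩
    subst h
    exact linearIndependent_empty_type
  · exact h

lemma circuit_fullsupport (A : Matrix k n ℝ) {C : Finset n} (hC : A.IsCircuit C) :
    ∃ c : n → ℝ, (∀ i, c i ≠ 0 ↔ i ∈ C) ∧ ∑ i, c i • A.transpose i = 0 := by
  classical
  obtain ⟨c, hc0, hcsum, hcne⟩ := (coldep_iff' A C).mp hC.1
  set S := univ.filter (fun i => c i ≠ 0) with hS
  have hsub : S ⊆ C := by
    intro i hi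
    rw [hS, Finset.mem_filter] at hi
    by_contra h
    exact hi.2 (hc0 i h)
  have hdep : A.ColDep S := by
    rw [coldep_iff']
    refine ⟨c, ?_, hcsum, hcne⟩
    intro i hi
    by_contra h
    exact hi (by simp [hS, h])
  have hSC : S = C := by
    by_contra hne
    exact hC.2 S (lt_of_le_of_ne hsub hne) hdep
  refine ⟨c, ?_, hcsum⟩
  intro i
  rw [← hSC]
  simp [hS]

end Aux

lemma exists_rows {k : Type*} [Fintype k] {r : ℕ} (w : Fin r → k → ℝ)
    (hw : LinearIndependent ℝ w) :
    ∃ f : Fin r → k, Function.Injective f ∧ (Matrix.of fun a j => w j (f a)).det ≠ 0 := by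
  classical
  set R : k → (Fin r → ℝ) := fun a j => w j a with hR
  have hspan : Submodule.span ℝ (Set.range R) = ⊤ := by
    by_contra hne
    obtain ⟨φ, hφ0, hφ⟩ := Submodule.exists_dual_map_eq_bot_of_lt_top
      (lt_top_iff_ne_top.2 hne) inferInstance
    set y : Fin r → ℝ := fun j => φ (Pi.single j 1) with hy
    have hker : ∀ x ∈ Submodule.span ℝ (Set.range R), φ x = 0 := by
      intro x hx
      have hmem : φ x ∈ Submodule.map φ (Submodule.span ℝ (Set.range R)) :=
        Submodule.mem_map_of_mem hx
      rw [hφ] at hmem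
      simpa using hmem
    have hval : ∀ a, φ (R a) = ∑ j, R a j * y j := by
      intro a
      have hRa : R a = ∑ j, (R a j) • (Pi.single j 1 : Fin r → ℝ) := by
        ext j'
        simp [Pi.single_apply]
      conv_lhs => rw [hRa]
      rw [map_sum]
      simp [hy, smul_eq_mul]
    have hcomb : ∑ j, y j • w j = 0 := by
      funext a
      have h0 : φ (R a) = 0 := hker _ (Submodule.subset_span (Set.mem_range_self a))
      rw [hval a] at h0
      simpa [Finset.sum_apply, smul_eq_mul, mul_comm] using h0
    have hy0 : ∀ j, y j = 0 := by
      have := Fintype.linearIndependent_iff.mp hw y hcomb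
      exact this
    apply hφ0
    apply LinearMap.ext
    intro x
    have hx : x = ∑ j, (x j) • (Pi.single j 1 : Fin r → ℝ) := by
      ext j'; simp [Pi.single_apply]
    have h0 : ∀ j, φ (Pi.single j 1) = 0 := hy0
    rw [hx, map_sum]
    simp [h0]
  obtain ⟨b, hbsub, hbspan, hbind⟩ := exists_linearIndependent ℝ (Set.range R)
  have hbspan' : Submodule.span ℝ b = ⊤ := by rw [hbspan, hspan]
  let B : Module.Basis b ℝ (Fin r → ℝ) := Module.Basis.mk hbind (by rw [Subtype.range_coe, hbspan'])
  haveI : Fintype b := FiniteDimensional.fintypeBasisIndex B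
  have hcard : Fintype.card b = r := by
    have := Module.finrank_eq_card_basis B
    rw [Module.finrank_fin_fun] at this
    omega
  let e : Fin r ≃ b := (Fintype.equivFinOfCardEq hcard).symm
  have hmem : ∀ a : Fin r, ((e a : Fin r → ℝ) : Fin r → ℝ) ∈ Set.range R := fun a => hbsub (e a).2
  set f : Fin r → k := fun a => (hmem a).choose with hf
  have hfspec : ∀ a, R (f a) = (e a : Fin r → ℝ) := fun a => (hmem a).choose_spec
  refine ⟨f, ?_, ?_⟩
  · intro a a' h
    have : (e a : Fin r → ℝ) = (e a' : Fin r → ℝ) := by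
      rw [← hfspec a, ← hfspec a', h]
    exact e.injective (Subtype.ext this)
  · set M : Matrix (Fin r) (Fin r) ℝ := Matrix.of fun a j => w j (f a) with hM
    have hrows : ∀ a, M a = (e a : Fin r → ℝ) := by
      intro a
      rw [← hfspec a]
      rfl
    have hli : LinearIndependent ℝ (fun a => M a) := by
      have : (fun a => M a) = (fun x : b => (x : Fin r → ℝ)) ∘ e := by
        funext a; rw [hrows a]; rfl
      rw [this]
      exact hbind.comp e e.injective
    have := Matrix.linearIndependent_rows_iff_isUnit.mp hli
    exact ((Matrix.isUnit_iff_isUnit_det M).mp this).ne_zero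


section Signed

variable {k n : Type*} [Fintype k] [Fintype n] [DecidableEq n]


lemma sign_cases_of_mem_range {x : ℝ} (h : x ∈ Set.range (SignType.cast : SignType → ℝ)) :
    x = 0 ∨ x = 1 ∨ x = -1 := by
  obtain ⟨s, hs⟩ := h
  cases s <;> simp_all [SignType.coe_neg]

lemma exists_signed_circuit (A : Matrix k n ℝ) (hA : A.IsTotallyUnimodular)
    {C : Finset n} (hC : A.IsCircuit C) :
    ∃ Cp Cm : Finset n, A.IsSignedCircuit Cp Cm ∧ Cp ∪ Cm = C := by
  classical
  obtain ⟨c0, hc0, hsum0⟩ := circuit_fullsupport A hC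
  obtain ⟨i0, hi0⟩ := circuit_nonempty A hC
  have hc0i0 : c0 i0 ≠ 0 := (hc0 i0).mpr hi0
  set c : n → ℝ := fun i => (-(c0 i0)⁻¹) * c0 i with hcdef
  have hci0 : c i0 = -1 := by
    rw [hcdef]
    field_simp
  have hcsupp : ∀ i, c i ≠ 0 ↔ i ∈ C := by
    intro i
    rw [hcdef, ← hc0 i]
    simp only [mul_ne_zero_iff, ne_eq, neg_eq_zero, inv_eq_zero]
    tauto
  have hcsum : ∑ i, c i • A.transpose i = 0 := by
    have : ∑ i, c i • A.transpose i = (-(c0 i0)⁻¹) • ∑ i, c0 i • A.transpose i := by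
      rw [Finset.smul_sum]
      apply Finset.sum_congr rfl
      intro i _
      rw [hcdef, smul_smul]
    rw [this, hsum0, smul_zero]
  -- set up columns of D = C.erase i0
  set D := C.erase i0 with hD
  set r := D.card with hr
  set e : Fin r ≃ D := D.equivFin.symm with he
  set g : Fin r → n := fun j => (e j : n) with hg
  have hgD : ∀ j, g j ∈ D := fun j => (e j).2
  have hgC : ∀ j, g j ∈ C := fun j => Finset.mem_of_mem_erase (hgD j)
  have hli : LinearIndependent ℝ (fun i : D => A.transpose i.1) := by
    have := hC.2 D (Finset.erase_ssubset hi0)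
    rw [Matrix.ColDep] at this
    exact not_not.mp this
  have hwli : LinearIndependent ℝ (fun j : Fin r => A.transpose (g j)) :=
    hli.comp e e.injective
  obtain ⟨f, hfinj, hdet⟩ := exists_rows (fun j => A.transpose (g j)) hwli
  set M : Matrix (Fin r) (Fin r) ℝ := Matrix.of fun a j => A.transpose (g j) (f a) with hM
  set b : Fin r → ℝ := fun a => A (f a) i0 with hb
  set x0 : Fin r → ℝ := fun j => c (g j) with hx0
  -- the key combination
  have hcomb : ∑ j, x0 j • A.transpose (g j) = A.transpose i0 := by
    have h1 : ∑ i ∈ C, c i • A.transpose i = ∑ i, c i • A.transpose i := by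
      apply Finset.sum_subset C.subset_univ
      intro x _ hx
      rw [not_not.mp (fun h => hx ((hcsupp x).mp h)), zero_smul]
    have h2 : c i0 • A.transpose i0 + ∑ i ∈ D, c i • A.transpose i
        = ∑ i ∈ C, c i • A.transpose i :=
      Finset.add_sum_erase C (fun i => c i • A.transpose i) hi0
    have h3 : ∑ i ∈ D, c i • A.transpose i = ∑ j, x0 j • A.transpose (g j) := by
      rw [← Finset.sum_coe_sort D (fun i => c i • A.transpose i)]
      exact (Equiv.sum_comp e (fun i : D => c i.1 • A.transpose i.1)).symm
    have hz : -A.transpose i0 + ∑ j, x0 j • A.transpose (g j) = 0 := by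
      rw [← h3, ← neg_one_smul ℝ (A.transpose i0), ← hci0, h2, h1, hcsum]
    exact (neg_add_eq_zero.mp hz).symm
  have hMx : M.mulVec x0 = b := by
    funext a
    have hpt := congrFun hcomb (f a)
    simp only [Finset.sum_apply, Pi.smul_apply, smul_eq_mul, Matrix.transpose_apply] at hpt
    simp only [Matrix.mulVec, dotProduct, hM, Matrix.of_apply, hb,
      Matrix.transpose_apply]
    rw [← hpt]
    apply Finset.sum_congr rfl
    intro j _
    ring
  have hMunit : IsUnit M := (Matrix.isUnit_iff_isUnit_det M).mpr (isUnit_iff_ne_zero.mpr hdet)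
  have hx0u : x0 = (M.det)⁻¹ • Matrix.cramer M b := by
    apply Matrix.mulVec_injective_iff_isUnit.mpr hMunit
    rw [hMx, Matrix.mulVec_smul, Matrix.mulVec_cramer, smul_smul, inv_mul_cancel₀ hdet,
      one_smul]
  have hTU := (Matrix.isTotallyUnimodular_iff A).mp hA
  have hdet1 : M.det = 1 ∨ M.det = -1 := by
    have hM' : M = A.submatrix f g := rfl
    have := sign_cases_of_mem_range (hTU r f g)
    rw [← hM'] at this
    tauto
  have hcram : ∀ j, Matrix.cramer M b j = 0 ∨ Matrix.cramer M b j = 1 ∨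
      Matrix.cramer M b j = -1 := by
    intro j
    rw [Matrix.cramer_apply]
    have hupdate : M.updateCol j b = A.submatrix f (Function.update g j i0) := by
      ext a j'
      rw [Matrix.updateCol_apply, Matrix.submatrix_apply, Function.update_apply]
      split <;> rfl
    rw [hupdate]
    exact sign_cases_of_mem_range (hTU r f (Function.update g j i0))
  have hcval : ∀ j, x0 j = 1 ∨ x0 j = -1 := by
    intro j
    have hne : x0 j ≠ 0 := (hcsupp (g j)).mpr (hgC j)
    have hxj : x0 j = (M.det)⁻¹ * Matrix.cramer M b j := by
      rw [hx0u]; simp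
    have h3 : x0 j = 0 ∨ x0 j = 1 ∨ x0 j = -1 := by
      rcases hdet1 with h | h <;> rcases hcram j with h2 | h2 | h2 <;>
        rw [h, h2] at hxj <;> norm_num at hxj <;> simp [hxj]
    rcases h3 with h | h | h
    · exact absurd h hne
    · exact Or.inl h
    · exact Or.inr h
  have hcC : ∀ i ∈ C, c i = 1 ∨ c i = -1 := by
    intro i hi
    rcases eq_or_ne i i0 with rfl | hne
    · exact Or.inr hci0
    · have hiD : i ∈ D := Finset.mem_erase.mpr ⟨hne, hi⟩
      have hgi : g (e.symm ⟨i, hiD⟩) = i := by simp [hg]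
      have := hcval (e.symm ⟨i, hiD⟩)
      simp only [hx0] at this
      rw [hgi] at this
      exact this
  set Cp := C.filter (fun i => c i = 1) with hCp
  set Cm := C.filter (fun i => c i = -1) with hCm
  have hun : Cp ∪ Cm = C := by
    rw [hCp, hCm, ← Finset.filter_or]
    exact Finset.filter_true_of_mem hcC
  have hdisj : Disjoint Cp Cm := by
    rw [Finset.disjoint_left]
    intro i h1 h2
    rw [hCp, Finset.mem_filter] at h1
    rw [hCm, Finset.mem_filter] at h2
    have := h1.2.symm.trans h2.2
    norm_num at this
  have h1 : ∑ i ∈ C, c i • A.transpose i = ∑ i, c i • A.transpose i := by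
    apply Finset.sum_subset C.subset_univ
    intro x _ hx
    rw [not_not.mp (fun h => hx ((hcsupp x).mp h)), zero_smul]
  have hsumpm : (∑ i ∈ Cp, A.transpose i) - (∑ i ∈ Cm, A.transpose i) = 0 := by
    have e1 : ∑ i ∈ Cp, A.transpose i = ∑ i ∈ Cp, c i • A.transpose i := by
      apply Finset.sum_congr rfl
      intro i hi
      rw [(Finset.mem_filter.mp hi).2, one_smul]
    have e2 : (∑ i ∈ Cm, A.transpose i) = -∑ i ∈ Cm, c i • A.transpose i := by
      refine Eq.trans ?_ (Finset.sum_neg_distrib _)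
      apply Finset.sum_congr rfl
      intro i hi
      rw [(Finset.mem_filter.mp hi).2]
      simp
    rw [e1, e2, sub_neg_eq_add, ← Finset.sum_union hdisj, hun, h1, hcsum]
  exact ⟨Cp, Cm, ⟨hdisj, by rw [hun]; exact hC, hsumpm⟩, hun⟩

end Signed

section Transfer

variable {k k' n : Type*} [Fintype k] [Fintype k'] [Fintype n] [DecidableEq n]

/-- the ±1 indicator vector of a signed pair -/
noncomputable def sgnv (Cp Cm : Finset n) : n → ℝ :=
  fun i => if i ∈ Cp then 1 else if i ∈ Cm then -1 else 0

lemma sgnv_sum (B : Matrix k' n ℝ) {Cp Cm : Finset n} (hd : Disjoint Cp Cm)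
    (h : (∑ i ∈ Cp, B.transpose i) - (∑ i ∈ Cm, B.transpose i) = 0) :
    ∑ i, sgnv Cp Cm i • B.transpose i = 0 := by
  classical
  have h1 : ∑ i ∈ Cp ∪ Cm, sgnv Cp Cm i • B.transpose i
      = ∑ i, sgnv Cp Cm i • B.transpose i := by
    apply Finset.sum_subset (Finset.subset_univ _)
    intro x _ hx
    rw [Finset.mem_union] at hx
    push_neg at hx
    rw [sgnv, if_neg hx.1, if_neg hx.2, zero_smul]
  rw [← h1, Finset.sum_union hd]
  have e1 : ∑ i ∈ Cp, sgnv Cp Cm i • B.transpose i = ∑ i ∈ Cp, B.transpose i := by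
    apply Finset.sum_congr rfl
    intro i hi
    rw [sgnv, if_pos hi, one_smul]
  have e2 : ∑ i ∈ Cm, sgnv Cp Cm i • B.transpose i = -∑ i ∈ Cm, B.transpose i := by
    refine Eq.trans ?_ (Finset.sum_neg_distrib _)
    apply Finset.sum_congr rfl
    intro i hi
    rw [sgnv, if_neg (Finset.disjoint_right.mp hd hi), if_pos hi]
    simp
  rw [e1, e2, ← sub_eq_add_neg, h]

lemma ker_transfer (A : Matrix k n ℝ) (A' : Matrix k' n ℝ) (hA : A.IsTotallyUnimodular)
    (hsc : ∀ Cp Cm : Finset n, A.IsSignedCircuit Cp Cm → A'.IsSignedCircuit Cp Cm)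
    (lam : n → ℝ) (h : ∑ i, lam i • A.transpose i = 0) :
    ∑ i, lam i • A'.transpose i = 0 := by
  classical
  suffices H : ∀ N : ℕ, ∀ lam : n → ℝ, (univ.filter fun i => lam i ≠ 0).card ≤ N →
      ∑ i, lam i • A.transpose i = 0 → ∑ i, lam i • A'.transpose i = 0 from
    H _ lam le_rfl h
  intro N
  induction N with
  | zero =>
    intro lam hcard _
    have hz : ∀ i, lam i = 0 := by
      intro i
      by_contra hi
      have : i ∈ univ.filter fun i => lam i ≠ 0 := by simp [hi]
      have := Finset.card_pos.mpr ⟨i, this⟩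
      omega
    simp [hz]
  | succ N ih =>
    intro lam hcard hker
    by_cases h0 : ∀ i, lam i = 0
    · simp [h0]
    push_neg at h0
    set S := univ.filter (fun i => lam i ≠ 0) with hSdef
    have hdep : A.ColDep S := by
      rw [coldep_iff']
      refine ⟨lam, ?_, hker, ?_⟩
      · intro i hi
        by_contra hc
        exact hi (by simp [hSdef, hc])
      · obtain ⟨i, hi⟩ := h0
        intro hc
        exact hi (congrFun hc i)
    obtain ⟨C, hCS, hC⟩ := exists_circuit_subset A S hdep
    obtain ⟨Cp, Cm, hsc1, hunion⟩ := exists_signed_circuit A hA hC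
    set c := sgnv Cp Cm with hcdef
    have hcA : ∑ i, c i • A.transpose i = 0 := sgnv_sum A hsc1.1 hsc1.2.2
    have hsc2 := hsc Cp Cm hsc1
    have hcA' : ∑ i, c i • A'.transpose i = 0 := sgnv_sum A' hsc2.1 hsc2.2.2
    have hcsupp : ∀ i, c i ≠ 0 → i ∈ C := by
      intro i hi
      rw [← hunion, Finset.mem_union]
      rw [hcdef, sgnv] at hi
      by_contra hcon
      push_neg at hcon
      rw [if_neg hcon.1, if_neg hcon.2] at hi
      exact hi rfl
    obtain ⟨i1, hi1C⟩ := circuit_nonempty A hC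
    have hci1 : c i1 ≠ 0 := by
      rw [hcdef, sgnv]
      have : i1 ∈ Cp ∪ Cm := hunion ▸ hi1C
      rw [Finset.mem_union] at this
      rcases this with h | h
      · rw [if_pos h]; norm_num
      · by_cases h2 : i1 ∈ Cp
        · rw [if_pos h2]; norm_num
        · rw [if_neg h2, if_pos h]; norm_num
    set t := lam i1 / c i1 with htdef
    set lam2 := fun i => lam i - t * c i with hlam2
    have hdecomp : ∀ (B : Matrix k' n ℝ), True := fun _ => trivial
    have hker2 : ∑ i, lam2 i • A.transpose i = 0 := by
      simp only [hlam2, sub_smul, mul_smul, Finset.sum_sub_distrib, ← Finset.smul_sum]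
      rw [hker, hcA, smul_zero, sub_zero]
    have hlam2i1 : lam2 i1 = 0 := by
      rw [hlam2, htdef]
      field_simp
      simp
    have hsupp2 : ∀ i, lam2 i ≠ 0 → i ∈ S.erase i1 := by
      intro i hi
      rw [Finset.mem_erase]
      constructor
      · rintro rfl
        exact hi hlam2i1
      · by_contra hiS
        have hlz : lam i = 0 := by
          by_contra hc
          exact hiS (by simp [hSdef, hc])
        have hcz : c i = 0 := by
          by_contra hc
          exact hiS (hCS (hcsupp i hc))
        rw [hlam2] at hi
        simp only [hlz, hcz, mul_zero, sub_zero] at hi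
        exact hi rfl
    have hcard2 : (univ.filter fun i => lam2 i ≠ 0).card ≤ N := by
      have hsub : (univ.filter fun i => lam2 i ≠ 0) ⊆ S.erase i1 := by
        intro i hi
        exact hsupp2 i (by simpa using hi)
      have h1 := Finset.card_le_card hsub
      have h2 : (S.erase i1).card = S.card - 1 :=
        Finset.card_erase_of_mem (hCS hi1C)
      omega
    have hres := ih lam2 hcard2 hker2
    have hfinal : ∑ i, lam i • A'.transpose i
        = ∑ i, lam2 i • A'.transpose i + t • ∑ i, c i • A'.transpose i := by
      simp only [hlam2, sub_smul, mul_smul, Finset.sum_sub_distrib, ← Finset.smul_sum]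
      abel
    rw [hfinal, hres, hcA', smul_zero, add_zero]

end Transfer

section Hull

variable {k n : Type*} [Fintype k] [Fintype n]

lemma mem_hull_iff (B : Matrix k n ℝ) (x : k → ℝ) :
    x ∈ convexHull ℝ (Set.range B.transpose) ↔
      ∃ lam : n → ℝ, (∀ i, 0 ≤ lam i) ∧ (∑ i, lam i = 1) ∧
        ∑ i, lam i • B.transpose i = x := by
  classical
  constructor
  · intro hx
    erw [convexHull_range_eq_exists_affineCombination] at hx
    obtain ⟨s, w, hw0, hw1, hx⟩ := hx
    refine ⟨fun i => if i ∈ s then w i else 0, ?_, ?_, ?_⟩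
    · intro i
      dsimp only
      split
      · exact hw0 i ‹_›
      · exact le_refl 0
    · rw [Finset.sum_ite_mem, Finset.univ_inter, hw1]
    · rw [← hx, Finset.affineCombination_eq_linear_combination s B.transpose w hw1]
      rw [← Finset.sum_subset s.subset_univ]
      · apply Finset.sum_congr rfl
        intro i hi
        dsimp only
        rw [if_pos hi]
      · intro i _ hi
        dsimp only
        rw [if_neg hi, zero_smul]
  · rintro ⟨lam, h0, h1, rfl⟩
    have := Finset.centerMass_mem_convexHull (univ : Finset n) (fun i _ => h0 i)
      (by rw [h1]; norm_num) (fun i _ => Set.mem_range_self (f := B.transpose) i)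
    erw [Finset.centerMass_eq_of_sum_1 _ _ h1] at this
    exact this

end Hull


/-- If totally unimodular matrices `A` and `A'` have the same signed
circuits (realize the same regular oriented matroid), then the map sending the point
`∑ λ_i a_i` of the root polytope of `A` (with `λ_i ≥ 0`, `∑ λ_i = 1`) to `∑ λ_i a'_i`
is a well-defined bijection `conv{a_1,…,a_m} → conv{a'_1,…,a'_m}`. -/
theorem root_polytope_bijection_of_same_signed_circuits
    {k k' n : Type*} [Fintype k] [Fintype k'] [Fintype n] [DecidableEq n]
    (A : Matrix k n ℝ) (A' : Matrix k' n ℝ)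
    (hA : A.IsTotallyUnimodular) (hA' : A'.IsTotallyUnimodular)
    (hsame : ∀ Cp Cm : Finset n, A.IsSignedCircuit Cp Cm ↔ A'.IsSignedCircuit Cp Cm) :
    ∃ φ : (k → ℝ) → (k' → ℝ),
      Set.BijOn φ (convexHull ℝ (Set.range A.transpose))
        (convexHull ℝ (Set.range A'.transpose)) ∧
      ∀ lam : n → ℝ, (∀ i, 0 ≤ lam i) → (∑ i, lam i = 1) →
        φ (∑ i, lam i • A.transpose i) = ∑ i, lam i • A'.transpose i := by
  classical
  have K1 : ∀ lam : n → ℝ, ∑ i, lam i • A.transpose i = 0 →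
      ∑ i, lam i • A'.transpose i = 0 :=
    ker_transfer A A' hA (fun Cp Cm h => (hsame Cp Cm).mp h)
  have K2 : ∀ lam : n → ℝ, ∑ i, lam i • A'.transpose i = 0 →
      ∑ i, lam i • A.transpose i = 0 :=
    ker_transfer A' A hA' (fun Cp Cm h => (hsame Cp Cm).mpr h)
  have hdiff : ∀ (B : Matrix k' n ℝ) (a b : n → ℝ),
      ∑ i, (a i - b i) • B.transpose i
        = (∑ i, a i • B.transpose i) - ∑ i, b i • B.transpose i := by
    intro B a b
    simp [sub_smul, Finset.sum_sub_distrib]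
  have hdiffA : ∀ (a b : n → ℝ),
      ∑ i, (a i - b i) • A.transpose i
        = (∑ i, a i • A.transpose i) - ∑ i, b i • A.transpose i := by
    intro a b
    simp [sub_smul, Finset.sum_sub_distrib]
  set P : (k → ℝ) → Prop := fun x => ∃ lam : n → ℝ, (∀ i, 0 ≤ lam i) ∧
      (∑ i, lam i = 1) ∧ ∑ i, lam i • A.transpose i = x with hP
  set φ : (k → ℝ) → (k' → ℝ) := fun x =>
    if h : P x then ∑ i, (Classical.choose h) i • A'.transpose i else 0 with hφ
  have hwd : ∀ (lam : n → ℝ), (∀ i, 0 ≤ lam i) → (∑ i, lam i = 1) →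
      φ (∑ i, lam i • A.transpose i) = ∑ i, lam i • A'.transpose i := by
    intro lam h0 h1
    have hPx : P (∑ i, lam i • A.transpose i) := ⟨lam, h0, h1, rfl⟩
    rw [hφ]
    simp only [dif_pos hPx]
    obtain ⟨-, -, hmu⟩ := Classical.choose_spec hPx
    have hker : ∑ i, ((Classical.choose hPx) i - lam i) • A.transpose i = 0 := by
      rw [hdiffA, hmu, sub_self]
    have hres := K1 _ hker
    rw [hdiff A'] at hres
    exact sub_eq_zero.mp hres
  refine ⟨φ, ⟨?_, ?_, ?_⟩, hwd⟩
  · -- MapsTo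
    intro x hx
    obtain ⟨lam, h0, h1, hx2⟩ := (mem_hull_iff A x).mp hx
    have := hwd lam h0 h1
    rw [hx2] at this
    rw [this]
    exact (mem_hull_iff A' _).mpr ⟨lam, h0, h1, rfl⟩
  · -- InjOn
    intro x hx y hy hxy
    obtain ⟨lam, hl0, hl1, hx2⟩ := (mem_hull_iff A x).mp hx
    obtain ⟨mu, hm0, hm1, hy2⟩ := (mem_hull_iff A y).mp hy
    have e1 := hwd lam hl0 hl1
    rw [hx2] at e1
    have e2 := hwd mu hm0 hm1
    rw [hy2] at e2
    have heq : ∑ i, lam i • A'.transpose i = ∑ i, mu i • A'.transpose i := by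
      rw [← e1, ← e2, hxy]
    have hker : ∑ i, (lam i - mu i) • A'.transpose i = 0 := by
      rw [hdiff A', heq, sub_self]
    have hres := K2 _ hker
    rw [hdiffA, hx2, hy2] at hres
    exact sub_eq_zero.mp hres
  · -- SurjOn
    intro y hy
    obtain ⟨mu, h0, h1, hy2⟩ := (mem_hull_iff A' y).mp hy
    refine ⟨∑ i, mu i • A.transpose i, (mem_hull_iff A _).mpr ⟨mu, h0, h1, rfl⟩, ?_⟩
    rw [hwd mu h0 h1, hy2]
end

section
/- Let A and A' be totally unimodular matrices representing the same regular oriented matroid (same signed circuits). Then for every positive integer t, the number of lattice points in t·conv{columns of A} equals the number of lattice points in t·conv{columns of A'}; consequently the two root polytopes have the same Ehrhart polynomial. -/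
open Finset Pointwise

section RootPolytopeHelpers

open Matrix Submodule Set

variable {k n : Type*} [Fintype k] [Fintype n]

set_option linter.unusedSectionVars false

lemma mulVec_eq_sum_smul (A : Matrix k n ℝ) (x : n → ℝ) :
    A.mulVec x = ∑ j, x j • Aᵀ j := by
  ext i
  simp [Matrix.mulVec, dotProduct, Finset.sum_apply, mul_comm]

lemma colDep_iff_s6 [DecidableEq n] (A : Matrix k n ℝ) (S : Finset n) :
    A.ColDep S ↔ ∃ u : n → ℝ, (∀ j ∉ S, u j = 0) ∧ A.mulVec u = 0 ∧ ∃ j, u j ≠ 0 := by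
  constructor
  · intro h
    rw [Matrix.ColDep, Fintype.not_linearIndependent_iff] at h
    obtain ⟨c, hc, i₀, hi₀⟩ := h
    refine ⟨fun j => if h : j ∈ S then c ⟨j, h⟩ else 0, fun j hj => by simp [hj], ?_, ⟨i₀, by simp [i₀.2, hi₀]⟩⟩
    rw [mulVec_eq_sum_smul]
    rw [← Finset.sum_subset (Finset.subset_univ S) (by intro j _ hj; simp [hj])]
    rw [← Finset.sum_attach S (fun j => (if h : j ∈ S then c ⟨j, h⟩ else 0) • Aᵀ j)]
    simpa using hc
  · rintro ⟨u, hsupp, hu, j₀, hj₀⟩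
    rw [Matrix.ColDep, Fintype.not_linearIndependent_iff]
    have hj₀S : j₀ ∈ S := by by_contra h; exact hj₀ (hsupp _ h)
    refine ⟨fun i => u i.1, ?_, ⟨⟨j₀, hj₀S⟩, hj₀⟩⟩
    rw [Finset.sum_coe_sort S (fun j => u j • Aᵀ j), Finset.sum_subset (Finset.subset_univ S) (by intro j _ hj; simp [hsupp j hj]),
      ← mulVec_eq_sum_smul, hu]

lemma exists_invertible_rows_s6 [DecidableEq n] (A : Matrix k n ℝ)
    (hind : LinearIndependent ℝ (fun j : n => Aᵀ j)) :
    ∃ r : n → k, Function.Injective r ∧ IsUnit (A.submatrix r id) := by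
  classical
  have hrank : A.rank = Fintype.card n := by
    rw [Matrix.rank_eq_finrank_span_cols]; exact finrank_span_eq_card hind
  have hrow : Module.finrank ℝ (span ℝ (Set.range A)) = Fintype.card n := by
    rw [← hrank, Matrix.rank_eq_finrank_span_row]; rfl
  obtain ⟨b, hbsub, hbspan, hbind⟩ := exists_linearIndependent ℝ (Set.range A)
  have hbfin : b.Finite := (Set.finite_range A).subset hbsub
  haveI : Fintype b := hbfin.fintype
  have hcard : Fintype.card b = Fintype.card n := by
    have h1 := finrank_span_set_eq_card hbind
    rw [hbspan, hrow, Set.toFinset_card] at h1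
    exact h1.symm
  have e : n ≃ b := (Fintype.equivOfCardEq hcard).symm
  have hmem : ∀ v : b, (v : n → ℝ) ∈ Set.range A := fun v => hbsub v.2
  choose g hg using fun v : b => hmem v
  refine ⟨fun j => g (e j), ?_, ?_⟩
  · intro j j' hjj'
    simp only at hjj'
    have : (e j : n → ℝ) = (e j' : n → ℝ) := by rw [← hg (e j), ← hg (e j'), hjj']
    exact e.injective (Subtype.ext this)
  · rw [← Matrix.linearIndependent_rows_iff_isUnit]
    have : (fun i => A.submatrix (fun j => g (e j)) id i) = fun i => ((e i : n → ℝ)) := by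
      funext i
      exact hg (e i)
    show LinearIndependent ℝ (fun i => A.submatrix (fun j => g (e j)) id i)
    rw [this]
    exact hbind.comp e e.injective

lemma circuit_signed_vector [DecidableEq n] (A : Matrix k n ℝ) (hA : A.IsTotallyUnimodular)
    {C : Finset n} (hC : A.IsCircuit C) :
    ∃ w : n → ℝ, A.mulVec w = 0 ∧ (∀ j ∈ C, w j = 1 ∨ w j = -1) ∧ ∀ j ∉ C, w j = 0 := by
  classical
  obtain ⟨u, hsupp, hu0, e, hj₀⟩ := (colDep_iff_s6 A C).mp hC.1
  have heC : e ∈ C := by by_contra h; exact hj₀ (hsupp _ h)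
  set u' : n → ℝ := (u e)⁻¹ • u with hu'
  have hu'e : u' e = 1 := by simp [hu', inv_mul_cancel₀ hj₀]
  have hu'0 : A.mulVec u' = 0 := by rw [hu', Matrix.mulVec_smul, hu0, smul_zero]
  have hsupp' : ∀ j ∉ C, u' j = 0 := fun j hj => by simp [hu', hsupp j hj]
  set D := C.erase e with hD
  have hDnd : ¬ A.ColDep D := hC.2 D (Finset.erase_ssubset heC)
  have hDind : LinearIndependent ℝ (fun i : D => Aᵀ i.1) := not_not.mp hDnd
  set CD : Matrix k D ℝ := A.submatrix id (fun v : D => (v : n)) with hCDdef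
  obtain ⟨r, hrinj, hM⟩ := exists_invertible_rows_s6 CD hDind
  set M : Matrix D D ℝ := CD.submatrix r id with hMdef
  set y₀ : D → ℝ := fun v => u' (v : n) with hy₀
  have hCD : CD.mulVec y₀ = -Aᵀ e := by
    rw [mulVec_eq_sum_smul]
    have h1 : ∑ v : D, y₀ v • CDᵀ v = ∑ j ∈ D, u' j • Aᵀ j :=
      Finset.sum_coe_sort D (fun j => u' j • Aᵀ j)
    have h2 : ∑ j ∈ D, u' j • Aᵀ j + u' e • Aᵀ e = ∑ j ∈ C, u' j • Aᵀ j :=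
      Finset.sum_erase_add C _ heC
    have h3 : ∑ j ∈ C, u' j • Aᵀ j = 0 := by
      rw [Finset.sum_subset (Finset.subset_univ C) (by intro j _ hj; simp [hsupp' j hj]),
        ← mulVec_eq_sum_smul, hu'0]
    rw [h1, eq_neg_of_add_eq_zero_left (h2.trans h3), hu'e, one_smul]
  have hMy : M.mulVec y₀ = fun i => -(A (r i) e) := by
    funext i
    exact congrFun hCD (r i)
  have hdet : M.det = 1 ∨ M.det = -1 := by
    have h0 : M.det ≠ 0 := by
      intro h
      rw [Matrix.isUnit_iff_isUnit_det, h] at hM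
      simpa using hM
    have hTU : M.IsTotallyUnimodular := hA.submatrix (id ∘ r) (fun v : D => (v : n))
    obtain ⟨s, hs⟩ := (Matrix.isTotallyUnimodular_iff_fintype M).mp hTU D id id
    rw [Matrix.submatrix_id_id] at hs
    cases s with
    | zero => exact absurd hs.symm (by simpa using h0)
    | pos => left; exact hs.symm
    | neg => right; simpa using hs.symm
  have hMinj : Function.Injective M.mulVec := Matrix.mulVec_injective_iff_isUnit.mpr hM
  have hcram : M.det • y₀ = Matrix.cramer M (fun i => -(A (r i) e)) := by
    apply hMinj
    rw [Matrix.mulVec_smul, hMy, Matrix.mulVec_cramer]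
  have hval : ∀ i : D, y₀ i = 0 ∨ y₀ i = 1 ∨ y₀ i = -1 := by
    intro i
    have h1 : M.det * y₀ i = Matrix.cramer M (fun x => -(A (r x) e)) i := by
      have := congrFun hcram i
      simpa using this
    set c : D → n := Function.update (fun v : D => (v : n)) i e with hc
    have hb : (fun x => -(A (r x) e)) = ((-1 : ℝ) • fun x : D => A (r x) e) := by
      funext x; simp
    have hsub : M.updateCol i (fun x => A (r x) e) = A.submatrix r c := by
      ext x y
      rw [Matrix.updateCol_apply, Matrix.submatrix_apply, hc, Function.update_apply]
      split <;> rfl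
    have h2 : Matrix.cramer M (fun x => -(A (r x) e)) i
        = -(A.submatrix r c).det := by
      rw [Matrix.cramer_apply, hb, Matrix.det_updateCol_smul, hsub]
      ring
    obtain ⟨s, hs⟩ := (Matrix.isTotallyUnimodular_iff_fintype A).mp hA D r c
    have hval2 : (A.submatrix r c).det = 0 ∨ (A.submatrix r c).det = 1 ∨
        (A.submatrix r c).det = -1 := by
      cases s with
      | zero => left; exact hs.symm ▸ by simp
      | pos => right; left; exact hs.symm ▸ by simp
      | neg => right; right; exact hs.symm ▸ by simp
    rw [h2] at h1
    have hyi : y₀ i = M.det * -(A.submatrix r c).det := by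
      rcases hdet with hd | hd <;> (rw [hd] at h1 ⊢; linarith)
    rcases hdet with hd | hd <;> rcases hval2 with hv | hv | hv <;> rw [hd, hv] at hyi <;>
      norm_num at hyi <;> tauto
  have hne : ∀ i : D, y₀ i ≠ 0 := by
    intro i hzero
    have hiC : (i : n) ∈ C := Finset.mem_of_mem_erase i.2
    apply hC.2 (C.erase (i : n)) (Finset.erase_ssubset hiC)
    rw [colDep_iff_s6]
    refine ⟨u', ?_, hu'0, ⟨e, by rw [hu'e]; norm_num⟩⟩
    intro j hj
    rcases eq_or_ne j (i : n) with rfl | hne'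
    · exact hzero
    · apply hsupp'
      intro hjC
      exact hj (Finset.mem_erase.mpr ⟨hne', hjC⟩)
  refine ⟨u', hu'0, ?_, hsupp'⟩
  intro j hj
  rcases eq_or_ne j e with rfl | hne'
  · left; exact hu'e
  · have hjD : j ∈ D := Finset.mem_erase.mpr ⟨hne', hj⟩
    rcases hval ⟨j, hjD⟩ with h | h | h
    · exact absurd h (hne ⟨j, hjD⟩)
    · left; exact h
    · right; exact h

lemma signed_sum_eq_mulVec [DecidableEq n] (A : Matrix k n ℝ) {Cp Cm : Finset n}
    (hd : Disjoint Cp Cm) {w : n → ℝ}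
    (hwp : ∀ j ∈ Cp, w j = 1) (hwm : ∀ j ∈ Cm, w j = -1)
    (hw0 : ∀ j, j ∉ Cp → j ∉ Cm → w j = 0) :
    (∑ i ∈ Cp, Aᵀ i) - (∑ i ∈ Cm, Aᵀ i) = A.mulVec w := by
  rw [mulVec_eq_sum_smul]
  rw [← Finset.sum_subset (Finset.subset_univ (Cp ∪ Cm)) (by
    intro j _ hj
    rw [Finset.mem_union] at hj
    push_neg at hj
    simp [hw0 j hj.1 hj.2])]
  rw [Finset.sum_union hd]
  have h1 : ∑ j ∈ Cp, w j • Aᵀ j = ∑ j ∈ Cp, Aᵀ j :=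
    Finset.sum_congr rfl (fun j hj => by rw [hwp j hj, one_smul])
  have h2 : ∑ j ∈ Cm, w j • Aᵀ j = -∑ j ∈ Cm, Aᵀ j := by
    rw [← Finset.sum_neg_distrib (f := fun j => Aᵀ j)]
    exact Finset.sum_congr rfl (fun j hj => by rw [hwm j hj]; module)
  rw [h1, h2, sub_eq_add_neg]

lemma ker_subset {k' : Type*} [Fintype k'] [DecidableEq n]
    (A : Matrix k n ℝ) (A' : Matrix k' n ℝ) (hA : A.IsTotallyUnimodular)
    (hsame : ∀ Cp Cm : Finset n, A.IsSignedCircuit Cp Cm → A'.IsSignedCircuit Cp Cm) :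
    ∀ x : n → ℝ, A.mulVec x = 0 → A'.mulVec x = 0 := by
  classical
  suffices H : ∀ N : ℕ, ∀ x : n → ℝ, (Finset.univ.filter (fun j => x j ≠ 0)).card ≤ N →
      A.mulVec x = 0 → A'.mulVec x = 0 by
    exact fun x => H _ x le_rfl
  intro N
  induction N with
  | zero =>
    intro x hcard hx
    have hempty : Finset.univ.filter (fun j => x j ≠ 0) = ∅ :=
      Finset.card_eq_zero.mp (le_antisymm hcard (Nat.zero_le _))
    have : x = 0 := by
      funext j
      by_contra hj
      have hmem : j ∈ Finset.univ.filter (fun j => x j ≠ 0) := by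
        simp only [Finset.mem_filter, Finset.mem_univ, true_and]
        simpa using hj
      rw [hempty] at hmem
      simp at hmem
    rw [this, Matrix.mulVec_zero]
  | succ N ih =>
    intro x hcard hx
    by_cases hx0 : x = 0
    · rw [hx0, Matrix.mulVec_zero]
    set supp := Finset.univ.filter (fun j => x j ≠ 0) with hsuppdef
    have hsuppne : supp.Nonempty := by
      rcases Function.ne_iff.mp hx0 with ⟨j, hj⟩
      have hj' : x j ≠ 0 := by simpa using hj
      exact ⟨j, by simp [hsuppdef, hj']⟩
    have hdep : A.ColDep supp := by
      rw [colDep_iff_s6]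
      obtain ⟨j, hj⟩ := hsuppne
      refine ⟨x, ?_, hx, ⟨j, by simpa [hsuppdef] using hj⟩⟩
      intro j' hj'
      by_contra h
      exact hj' (by simp [hsuppdef, h])
    obtain ⟨C, hCmem, hCmin⟩ := Finset.exists_min_image
      ((supp.powerset).filter (A.ColDep ·)) Finset.card
      ⟨supp, by simp [hdep]⟩
    rw [Finset.mem_filter, Finset.mem_powerset] at hCmem
    obtain ⟨hCsub, hCdep⟩ := hCmem
    have hCcirc : A.IsCircuit C := by
      refine ⟨hCdep, fun S hS hSdep => ?_⟩
      have hle := hCmin S (by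
        rw [Finset.mem_filter, Finset.mem_powerset]
        exact ⟨hS.subset.trans hCsub, hSdep⟩)
      have := Finset.card_lt_card hS
      omega
    obtain ⟨w, hw0, hwpm, hwout⟩ := circuit_signed_vector A hA hCcirc
    set Cp := C.filter (fun j => w j = 1) with hCp
    set Cm := C.filter (fun j => w j = -1) with hCm
    have hdisj : Disjoint Cp Cm := by
      rw [Finset.disjoint_left]
      intro j hj1 hj2
      rw [hCp, Finset.mem_filter] at hj1
      rw [hCm, Finset.mem_filter] at hj2
      linarith [hj1.2, hj2.2]
    have hunion : Cp ∪ Cm = C := by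
      apply Finset.Subset.antisymm
      · exact Finset.union_subset (Finset.filter_subset _ _) (Finset.filter_subset _ _)
      · intro j hj
        rcases hwpm j hj with h | h
        · exact Finset.mem_union_left _ (Finset.mem_filter.mpr ⟨hj, h⟩)
        · exact Finset.mem_union_right _ (Finset.mem_filter.mpr ⟨hj, h⟩)
    have hwp : ∀ j ∈ Cp, w j = 1 := fun j hj => (Finset.mem_filter.mp hj).2
    have hwm : ∀ j ∈ Cm, w j = -1 := fun j hj => (Finset.mem_filter.mp hj).2
    have hwz : ∀ j, j ∉ Cp → j ∉ Cm → w j = 0 := by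
      intro j h1 h2
      by_cases hj : j ∈ C
      · rcases hwpm j hj with h | h
        · exact absurd (Finset.mem_filter.mpr ⟨hj, h⟩) h1
        · exact absurd (Finset.mem_filter.mpr ⟨hj, h⟩) h2
      · exact hwout j hj
    have hsc : A.IsSignedCircuit Cp Cm := by
      refine ⟨hdisj, by rwa [hunion], ?_⟩
      rw [signed_sum_eq_mulVec A hdisj hwp hwm hwz, hw0]
    have hsc' := hsame _ _ hsc
    have hw0' : A'.mulVec w = 0 := by
      rw [← signed_sum_eq_mulVec A' hdisj hwp hwm hwz]
      exact hsc'.2.2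
    have hCne : C.Nonempty := by
      rcases Finset.eq_empty_or_nonempty C with rfl | h
      · exact absurd linearIndependent_empty_type hCdep
      · exact h
    obtain ⟨e, heC⟩ := hCne
    have hwe : w e = 1 ∨ w e = -1 := hwpm e heC
    have hwe2 : w e * w e = 1 := by rcases hwe with h | h <;> rw [h] <;> ring
    set c : ℝ := x e * w e with hcdef
    set x' : n → ℝ := fun j => x j - c * w j with hx'def
    have hx'e : x' e = 0 := by
      simp only [hx'def, hcdef]
      calc x e - x e * w e * w e = x e - x e * (w e * w e) := by ring
      _ = 0 := by rw [hwe2]; ring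
    have hxsplit : x = x' + c • w := by
      funext j
      simp only [hx'def, Pi.add_apply, Pi.smul_apply, smul_eq_mul]
      ring
    have hAx' : A.mulVec x' = 0 := by
      have hxs : x' = x - c • w := by
        funext j
        simp only [hx'def, Pi.sub_apply, Pi.smul_apply, smul_eq_mul]
      rw [hxs, Matrix.mulVec_sub, Matrix.mulVec_smul, hx, hw0, smul_zero, sub_zero]
    have hesupp : e ∈ supp := hCsub heC
    have hsub : Finset.univ.filter (fun j => x' j ≠ 0) ⊆ supp.erase e := by
      intro j hj
      rw [Finset.mem_filter] at hj
      rw [Finset.mem_erase]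
      refine ⟨?_, ?_⟩
      · rintro rfl; exact hj.2 hx'e
      · by_contra hjs
        apply hj.2
        have hxj : x j = 0 := by
          by_contra h
          exact hjs (by simp [hsuppdef, h])
        have hwj : w j = 0 := hwout j (fun hjC => hjs (hCsub hjC))
        simp [hx'def, hxj, hwj]
    have hcard' : (Finset.univ.filter (fun j => x' j ≠ 0)).card ≤ N := by
      have h1 := Finset.card_le_card hsub
      have h2 : (supp.erase e).card < supp.card := Finset.card_erase_lt_of_mem hesupp
      omega
    have hA'x' := ih x' hcard' hAx'
    rw [hxsplit, Matrix.mulVec_add, Matrix.mulVec_smul, hA'x', hw0', smul_zero, add_zero]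

lemma tu_entry_int (A : Matrix k n ℝ) (hA : A.IsTotallyUnimodular) :
    ∃ A₀ : Matrix k n ℤ, ∀ i j, A i j = (A₀ i j : ℝ) := by
  classical
  have h : ∀ i j, ∃ m : ℤ, A i j = (m : ℝ) := by
    intro i j
    obtain ⟨s, hs⟩ := hA.apply i j
    cases s with
    | zero => exact ⟨0, by simp [← hs]⟩
    | pos => exact ⟨1, by simp [← hs]⟩
    | neg => exact ⟨-1, by simp [← hs]⟩
  choose A₀ hA₀ using h
  exact ⟨Matrix.of A₀, hA₀⟩

lemma tu_int_solution [DecidableEq n] (A : Matrix k n ℝ) (hA : A.IsTotallyUnimodular)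
    (hind : LinearIndependent ℝ (fun j : n => Aᵀ j))
    (p : k → ℝ) (hpint : ∀ i, ∃ m : ℤ, p i = (m : ℝ))
    (hpspan : p ∈ Submodule.span ℝ (Set.range Aᵀ)) :
    ∃ z : n → ℤ, A.mulVec (fun j => (z j : ℝ)) = p := by
  classical
  obtain ⟨r, hrinj, hM⟩ := exists_invertible_rows_s6 A hind
  set M : Matrix n n ℝ := A.submatrix r id with hMdef
  obtain ⟨A₀, hA₀⟩ := tu_entry_int A hA
  set M₀ : Matrix n n ℤ := Matrix.of (fun i j => A₀ (r i) j) with hM₀def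
  have hMcast : M = (Int.castRingHom ℝ).mapMatrix M₀ := by
    ext i j
    simp [hMdef, hM₀def, hA₀]
  have hdet0 : (M₀.det : ℝ) = M.det := by
    rw [hMcast, ← RingHom.map_det]
    rfl
  have hMdetne : M.det ≠ 0 := by
    intro h
    rw [Matrix.isUnit_iff_isUnit_det, h] at hM
    simp at hM
  have hdetunit : IsUnit M₀.det := by
    have hTU : M.IsTotallyUnimodular := hA.submatrix r id
    obtain ⟨s, hs⟩ := (Matrix.isTotallyUnimodular_iff_fintype M).mp hTU n id id
    rw [Matrix.submatrix_id_id] at hs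
    cases s with
    | zero => exact absurd hs.symm (by simpa using hMdetne)
    | pos =>
      have h1 : (M₀.det : ℝ) = 1 := by rw [hdet0, ← hs]; simp
      have : M₀.det = 1 := by exact_mod_cast h1
      rw [this]; exact isUnit_one
    | neg =>
      have h1 : (M₀.det : ℝ) = -1 := by rw [hdet0, ← hs]; simp
      have : M₀.det = -1 := by exact_mod_cast h1
      rw [this]; simp
  obtain ⟨w, hw⟩ : ∃ w, A.mulVec w = p := by
    change p ∈ Submodule.span ℝ (Set.range A.col) at hpspan
    rw [← Matrix.range_mulVecLin] at hpspan
    obtain ⟨w, hw⟩ := hpspan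
    exact ⟨w, hw⟩
  choose p₀ hp₀ using hpint
  set z : n → ℤ := M₀⁻¹.mulVec (fun i => p₀ (r i)) with hzdef
  have hMz : M₀.mulVec z = fun i => p₀ (r i) := by
    rw [hzdef, Matrix.mulVec_mulVec, Matrix.mul_nonsing_inv _ hdetunit, Matrix.one_mulVec]
  have hMcastz : M.mulVec (fun j => (z j : ℝ)) = fun i => p (r i) := by
    funext i
    have : M.mulVec (fun j => (z j : ℝ)) i = ((M₀.mulVec z i : ℤ) : ℝ) := by
      simp only [Matrix.mulVec, dotProduct, hMcast]
      push_cast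
      rfl
    rw [this, hMz, ← hp₀]
  have hMw : M.mulVec w = fun i => p (r i) := by
    funext i
    have : M.mulVec w i = A.mulVec w (r i) := rfl
    rw [this, hw]
  have hinj : Function.Injective M.mulVec := Matrix.mulVec_injective_iff_isUnit.mpr hM
  have hzw : (fun j => (z j : ℝ)) = w := hinj (hMcastz.trans hMw.symm)
  exact ⟨z, by rw [hzw, hw]⟩

lemma tu_exists_int_preimage [DecidableEq n] (A : Matrix k n ℝ) (hA : A.IsTotallyUnimodular)
    (x : n → ℝ) (hx : ∀ i, ∃ m : ℤ, A.mulVec x i = (m : ℝ)) :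
    ∃ z : n → ℤ, A.mulVec (fun j => (z j : ℝ)) = A.mulVec x := by
  classical
  obtain ⟨b, hbsub, hbspan, hbind⟩ := exists_linearIndependent ℝ (Set.range Aᵀ)
  haveI : Fintype b := ((Set.finite_range Aᵀ).subset hbsub).fintype
  choose g hg using fun v : b => hbsub v.2
  set CB : Matrix k b ℝ := A.submatrix id g with hCBdef
  have hcols : CBᵀ = fun v : b => (v : k → ℝ) := by
    funext v
    exact hg v
  have hCBind : LinearIndependent ℝ (fun v : b => CBᵀ v) := by
    rw [hcols]
    exact hbind
  have hCBspan : Submodule.span ℝ (Set.range CBᵀ) = Submodule.span ℝ (Set.range Aᵀ) := by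
    rw [hcols, Subtype.range_coe]
    exact hbspan
  have hmem : A.mulVec x ∈ Submodule.span ℝ (Set.range CBᵀ) := by
    rw [hCBspan, mulVec_eq_sum_smul]
    exact Submodule.sum_mem _ fun j _ =>
      Submodule.smul_mem _ _ (Submodule.subset_span (Set.mem_range_self j))
  obtain ⟨z, hz⟩ := tu_int_solution CB (hA.submatrix id g) hCBind (A.mulVec x) hx hmem
  set Z : n → ℤ := fun j => ∑ v : b, if g v = j then z v else 0 with hZdef
  refine ⟨Z, ?_⟩
  have : A.mulVec (fun j => (Z j : ℝ)) = CB.mulVec (fun v => (z v : ℝ)) := by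
    funext i
    simp only [Matrix.mulVec, dotProduct, hZdef, hCBdef, Matrix.submatrix_apply, id]
    push_cast
    simp_rw [Finset.mul_sum, mul_ite, mul_zero]
    rw [Finset.sum_comm]
    refine Finset.sum_congr rfl fun v _ => ?_
    rw [Finset.sum_ite_eq]
    simp
  rw [this, hz]

lemma mem_dilate_iff (A : Matrix k n ℝ) (t : ℕ) (ht : 0 < t) (p : k → ℝ) :
    p ∈ (t : ℝ) • convexHull ℝ (Set.range Aᵀ) ↔
    ∃ x : n → ℝ, (∀ j, 0 ≤ x j) ∧ (∑ j, x j = (t : ℝ)) ∧ A.mulVec x = p := by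
  classical
  have htR : (0:ℝ) < (t:ℝ) := by exact_mod_cast ht
  constructor
  · intro hp
    rw [Set.mem_smul_set] at hp
    obtain ⟨y, hy, hyp⟩ := hp
    erw [convexHull_range_eq_exists_affineCombination] at hy
    obtain ⟨s, w, hw0, hw1, hys⟩ := hy
    rw [affineCombination_eq_linear_combination s Aᵀ w hw1] at hys
    refine ⟨fun j => (t:ℝ) * (if j ∈ s then w j else 0), ?_, ?_, ?_⟩
    · intro j
      by_cases h : j ∈ s
      · simp only [h, if_true]; exact mul_nonneg htR.le (hw0 j h)
      · simp [h]
    · rw [← Finset.mul_sum]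
      rw [Finset.sum_ite_mem, Finset.univ_inter, hw1, mul_one]
    · rw [mulVec_eq_sum_smul]
      have : ∑ j : n, ((t:ℝ) * (if j ∈ s then w j else 0)) • Aᵀ j
          = (t:ℝ) • ∑ j ∈ s, w j • Aᵀ j := by
        rw [Finset.smul_sum, ← Finset.sum_subset (Finset.subset_univ s)
          (by intro j _ hj; simp [hj])]
        refine Finset.sum_congr rfl fun j hj => ?_
        simp only [hj, if_true]
        rw [mul_smul]
      rw [this, hys, hyp]
  · rintro ⟨x, hx0, hxsum, hxA⟩
    rw [Set.mem_smul_set]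
    refine ⟨Finset.univ.centerMass x Aᵀ, ?_, ?_⟩
    · exact Finset.centerMass_mem_convexHull Finset.univ (fun i _ => hx0 i)
        (by rw [hxsum]; exact htR) (fun i _ => Set.mem_range_self i)
    · rw [show Finset.univ.centerMass x Aᵀ = (∑ i, x i)⁻¹ • ∑ i, x i • Aᵀ i from rfl, hxsum, smul_smul, mul_inv_cancel₀ (ne_of_gt htR), one_smul,
        ← mulVec_eq_sum_smul, hxA]

end RootPolytopeHelpers

/-- If totally unimodular matrices `A` and `A'` have the same signed circuits,
then for every positive integer `t` the dilates `t·Q_A` and `t·Q_{A'}` of the two root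
polytopes contain the same number of lattice points; hence the Ehrhart polynomials agree. -/
theorem root_polytope_same_lattice_point_counts
    {k k' n : Type*} [Fintype k] [Fintype k'] [Fintype n] [DecidableEq n]
    (A : Matrix k n ℝ) (A' : Matrix k' n ℝ)
    (hA : A.IsTotallyUnimodular) (hA' : A'.IsTotallyUnimodular)
    (hsame : ∀ Cp Cm : Finset n, A.IsSignedCircuit Cp Cm ↔ A'.IsSignedCircuit Cp Cm) :
    ∀ t : ℕ, 0 < t →
      {p : k → ℤ | (fun j => (p j : ℝ)) ∈
          (t : ℝ) • convexHull ℝ (Set.range A.transpose)}.ncard =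
      {p : k' → ℤ | (fun j => (p j : ℝ)) ∈
          (t : ℝ) • convexHull ℝ (Set.range A'.transpose)}.ncard := by
  classical
  intro t ht
  obtain ⟨A₀, hA₀⟩ := tu_entry_int A hA
  obtain ⟨A₀', hA₀'⟩ := tu_entry_int A' hA'
  have hkd : ∀ x y : n → ℝ, A.mulVec x = A.mulVec y → A'.mulVec x = A'.mulVec y := by
    intro x y h
    have h2 := ker_subset A A' hA (fun Cp Cm h => (hsame Cp Cm).mp h) (x - y)
      (by rw [Matrix.mulVec_sub, h, sub_self])
    rw [Matrix.mulVec_sub, sub_eq_zero] at h2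
    exact h2
  have hkd' : ∀ x y : n → ℝ, A'.mulVec x = A'.mulVec y → A.mulVec x = A.mulVec y := by
    intro x y h
    have h2 := ker_subset A' A hA' (fun Cp Cm h => (hsame Cp Cm).mpr h) (x - y)
      (by rw [Matrix.mulVec_sub, h, sub_self])
    rw [Matrix.mulVec_sub, sub_eq_zero] at h2
    exact h2
  set P : (k → ℤ) → (k' → ℤ) → Prop := fun p q => ∃ x : n → ℝ,
    (∀ j, 0 ≤ x j) ∧ (∑ j, x j = (t:ℝ)) ∧
    A.mulVec x = (fun i => (p i : ℝ)) ∧ A'.mulVec x = (fun i => (q i : ℝ)) with hP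
  have hPuniq : ∀ p q q', P p q → P p q' → q = q' := by
    rintro p q q' ⟨x, _, _, hx1, hx2⟩ ⟨y, _, _, hy1, hy2⟩
    have h := hkd x y (hx1.trans hy1.symm)
    rw [hx2, hy2] at h
    funext i
    exact_mod_cast congrFun h i
  have hcastA' : ∀ z : n → ℤ,
      A'.mulVec (fun j => (z j : ℝ)) = fun i => ((A₀'.mulVec z i : ℤ) : ℝ) := by
    intro z
    funext i
    simp only [Matrix.mulVec, dotProduct, hA₀']
    push_cast
    rfl
  have hcastA : ∀ z : n → ℤ,
      A.mulVec (fun j => (z j : ℝ)) = fun i => ((A₀.mulVec z i : ℤ) : ℝ) := by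
    intro z
    funext i
    simp only [Matrix.mulVec, dotProduct, hA₀]
    push_cast
    rfl
  have hexists : ∀ p : k → ℤ,
      (fun j => (p j : ℝ)) ∈ (t:ℝ) • convexHull ℝ (Set.range A.transpose) → ∃ q, P p q := by
    intro p hp
    obtain ⟨x, hx0, hxsum, hxA⟩ := (mem_dilate_iff A t ht _).mp hp
    obtain ⟨z, hz⟩ := tu_exists_int_preimage A hA x (fun i => ⟨p i, congrFun hxA i⟩)
    have hA'x : A'.mulVec x = A'.mulVec (fun j => (z j : ℝ)) := hkd _ _ hz.symm
    exact ⟨fun i => A₀'.mulVec z i, x, hx0, hxsum, hxA, by rw [hA'x, hcastA' z]⟩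
  have hexists' : ∀ q : k' → ℤ,
      (fun j => (q j : ℝ)) ∈ (t:ℝ) • convexHull ℝ (Set.range A'.transpose) → ∃ p, P p q := by
    intro q hq
    obtain ⟨x, hx0, hxsum, hxA'⟩ := (mem_dilate_iff A' t ht _).mp hq
    obtain ⟨z, hz⟩ := tu_exists_int_preimage A' hA' x (fun i => ⟨q i, congrFun hxA' i⟩)
    have hAx : A.mulVec x = A.mulVec (fun j => (z j : ℝ)) := hkd' _ _ hz.symm
    exact ⟨fun i => A₀.mulVec z i, x, hx0, hxsum, by rw [hAx, hcastA z], hxA'⟩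
  set f : (k → ℤ) → (k' → ℤ) := fun p => if h : ∃ q, P p q then h.choose else 0 with hf
  have hfP : ∀ p, (∃ q, P p q) → P p (f p) := by
    intro p h
    rw [hf]
    dsimp only
    rw [dif_pos h]
    exact h.choose_spec
  have hbij : Set.BijOn f
      {p : k → ℤ | (fun j => (p j : ℝ)) ∈ (t : ℝ) • convexHull ℝ (Set.range A.transpose)}
      {p : k' → ℤ | (fun j => (p j : ℝ)) ∈ (t : ℝ) • convexHull ℝ (Set.range A'.transpose)} := by
    refine ⟨?_, ?_, ?_⟩
    · intro p hp
      obtain ⟨x, hx0, hxsum, _, hx2⟩ := hfP p (hexists p hp)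
      exact (mem_dilate_iff A' t ht _).mpr ⟨x, hx0, hxsum, hx2⟩
    · intro p hp p' hp' hff
      obtain ⟨x, _, _, hx1, hx2⟩ := hfP p (hexists p hp)
      obtain ⟨y, _, _, hy1, hy2⟩ := hfP p' (hexists p' hp')
      have h : A'.mulVec x = A'.mulVec y := by rw [hx2, hy2, hff]
      have h2 := hkd' x y h
      rw [hx1, hy1] at h2
      funext i
      exact_mod_cast congrFun h2 i
    · intro q hq
      obtain ⟨p, hPp⟩ := hexists' q hq
      obtain ⟨x, hx0, hxsum, hx1, hx2⟩ := id hPp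
      refine ⟨p, (mem_dilate_iff A t ht _).mpr ⟨x, hx0, hxsum, hx1⟩, ?_⟩
      exact hPuniq p (f p) q (hfP p ⟨q, hPp⟩) hPp
  rw [← hbij.image_eq, Set.ncard_image_of_injOn hbij.injOn]
end

section
/- Let A be a totally unimodular matrix of rank r with columns a_1,...,a_m, and suppose some signed circuit C = C^+ ⊔ C^- has |C^+| ≠ |C^-|. Then the root polytope conv{a_1,...,a_m} has affine dimension r. -/
open Finset

/-- If `A` is totally unimodular of rank `r` and some signed circuit
`C = C⁺ ⊔ C⁻` has `|C⁺| ≠ |C⁻|`, then the root polytope `conv{a_1,…,a_m}` has affine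
dimension `r`. -/
theorem root_polytope_dim_of_not_coEulerian
    {k n : Type*} [Fintype k] [Fintype n] [DecidableEq n]
    (A : Matrix k n ℝ) (hA : A.IsTotallyUnimodular) (r : ℕ) (hr : A.rank = r)
    (hnc : ∃ Cp Cm : Finset n, A.IsSignedCircuit Cp Cm ∧ Cp.card ≠ Cm.card) :
    Module.finrank ℝ (affineSpan ℝ (Set.range A.transpose)).direction = r := by
  obtain ⟨Cp, Cm, ⟨hdisj, _, hsum⟩, hcard⟩ := hnc
  -- the normalizing constant
  set c : ℝ := (Cp.card : ℝ) - (Cm.card : ℝ) with hc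
  have hc0 : c ≠ 0 := sub_ne_zero.mpr (by exact_mod_cast hcard)
  -- weights
  set w : n → ℝ := fun i => if i ∈ Cp then 1 / c else if i ∈ Cm then -(1 / c) else 0 with hw
  have hwsum : ∑ i, w i = 1 := by
    rw [← Finset.sum_subset (Finset.subset_univ (Cp ∪ Cm))
      (by intro x _ hx; simp only [hw, Finset.mem_union, not_or] at hx ⊢
          rw [if_neg hx.1, if_neg hx.2]),
      Finset.sum_union hdisj]
    have h1 : ∑ i ∈ Cp, w i = Cp.card * (1 / c) := by
      rw [Finset.sum_congr rfl (fun i hi => by simp only [hw]; rw [if_pos hi])]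
      simp [mul_comm]
    have h2 : ∑ i ∈ Cm, w i = Cm.card * (-(1 / c)) := by
      rw [Finset.sum_congr rfl (fun i hi => by
        simp only [hw]; rw [if_neg (Finset.disjoint_right.mp hdisj hi), if_pos hi])]
      simp [mul_comm]
    rw [h1, h2]
    field_simp
    ring
  have hzero : (0 : k → ℝ) ∈ affineSpan ℝ (Set.range A.transpose) := by
    have := affineCombination_mem_affineSpan (k := ℝ) hwsum A.transpose
    have heq : Finset.univ.affineCombination ℝ A.transpose w = 0 := by
      erw [Finset.affineCombination_eq_linear_combination _ _ _ hwsum]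
      rw [← Finset.sum_subset (Finset.subset_univ (Cp ∪ Cm))
        (by intro x _ hx; simp only [hw, Finset.mem_union, not_or] at hx ⊢
            rw [if_neg hx.1, if_neg hx.2, zero_smul]),
        Finset.sum_union hdisj]
      have h1 : ∑ i ∈ Cp, w i • A.transpose i = (1 / c) • ∑ i ∈ Cp, A.transpose i := by
        erw [Finset.smul_sum]
        refine Finset.sum_congr rfl fun i hi => ?_
        simp only [hw]; rw [if_pos hi]
      have h2 : ∑ i ∈ Cm, w i • A.transpose i = -((1 / c) • ∑ i ∈ Cm, A.transpose i) := by
        erw [Finset.smul_sum, ← Finset.sum_neg_distrib]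
        refine Finset.sum_congr rfl fun i hi => ?_
        simp only [hw]; rw [if_neg (Finset.disjoint_right.mp hdisj hi), if_pos hi, neg_smul]
      rw [h1, h2, ← sub_eq_add_neg, ← smul_sub, hsum, smul_zero]
    rwa [heq] at this
  -- direction of the affine span is the linear span of the columns
  have hdir : (affineSpan ℝ (Set.range A.transpose)).direction
      = Submodule.span ℝ (Set.range A.transpose) := by
    rw [direction_affineSpan,
      ← vectorSpan_insert_eq_vectorSpan (k := ℝ) hzero,
      vectorSpan_eq_span_vsub_set_right ℝ (Set.mem_insert 0 _)]
    have : (fun x => x -ᵥ (0 : k → ℝ)) '' insert 0 (Set.range A.transpose)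
        = insert 0 (Set.range A.transpose) := by
      ext x
      simp [vsub_eq_sub]
    rw [this, Submodule.span_insert_zero]
  rw [hdir, ← hr, Matrix.rank_eq_finrank_span_cols]
  rfl
end

section
/- Let A be a totally unimodular matrix representing a co-Eulerian regular oriented matroid of rank r, and let B = {i_1,...,i_r} be a basis (a maximal linearly independent set of columns). Then the simplex conv{a_{i_1},...,a_{i_r}} is unimodular: the vectors a_{i_1} - a_{i_r}, ..., a_{i_{r-1}} - a_{i_r} generate as an integer lattice every integer point in their real linear span. -/
open Finset

lemma exists_rows_invertible {k : Type*} [Fintype k] {ι : Type*} [Fintype ι] [DecidableEq ι]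
    (M : Matrix k ι ℝ) (h : LinearIndependent ℝ (fun i => M.transpose i)) :
    ∃ f : ι → k, Function.Injective f ∧ IsUnit (M.submatrix f id) := by
  classical
  have hrank : M.transpose.rank = Fintype.card ι := h.rank_matrix
  have hspan : Submodule.span ℝ (Set.range M) = ⊤ := by
    apply Submodule.eq_top_of_finrank_eq
    have := M.transpose.rank_eq_finrank_span_cols
    rw [show M.transpose.col = M from rfl] at this
    rw [← this, hrank, Module.finrank_fintype_fun_eq_card]
  obtain ⟨b, hbsub, hbspan, hbli⟩ := exists_linearIndependent ℝ (Set.range M)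
  rw [hspan] at hbspan
  haveI : Fintype b := hbli.setFinite.fintype
  let bas : Module.Basis b ℝ (ι → ℝ) := Module.Basis.mk hbli (by rw [Subtype.range_coe, hbspan])
  have hcard : Fintype.card ι = Fintype.card b := by
    rw [← Module.finrank_eq_card_basis bas, Module.finrank_fintype_fun_eq_card]
  let φ : ι ≃ b := Fintype.equivOfCardEq hcard
  choose ch hch using fun x : b => (hbsub x.2 : (x : ι → ℝ) ∈ Set.range M)
  refine ⟨fun i => ch (φ i), ?_, ?_⟩
  · intro i1 i2 h12
    apply φ.injective
    apply Subtype.ext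
    have := congrArg M h12
    rw [hch (φ i1), hch (φ i2)] at this
    exact this
  · rw [← Matrix.linearIndependent_rows_iff_isUnit]
    have : (fun i => (M.submatrix (fun i => ch (φ i)) id) i) = (fun x : b => (x : ι → ℝ)) ∘ φ := by
      funext i
      simp only [Function.comp]
      rw [← hch (φ i)]
      rfl
    rw [show (M.submatrix (fun i => ch (φ i)) id).row = _ from this]
    exact hbli.comp φ φ.injective


theorem basis_simplex_unimodular'
    {k n : Type*} [Fintype k] [Fintype n] [DecidableEq n]
    (A : Matrix k n ℝ) (hA : A.IsTotallyUnimodular)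
    (B : Finset n) (hBind : LinearIndependent ℝ (fun i : B => A.transpose i.1)) :
    ∀ e ∈ B, ∀ p : k → ℤ,
      (fun j => (p j : ℝ)) ∈
        Submodule.span ℝ {v : k → ℝ | ∃ i ∈ B, v = A.transpose i - A.transpose e} →
      (fun j => (p j : ℝ)) ∈
        Submodule.span ℤ {v : k → ℝ | ∃ i ∈ B, v = A.transpose i - A.transpose e} := by
  classical
  intro e he p hp
  set g : B → (k → ℝ) := fun i => A.transpose i.1 - A.transpose e with hgdef
  have hset : {v : k → ℝ | ∃ i ∈ B, v = A.transpose i - A.transpose e} = Set.range g := by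
    ext v
    constructor
    · rintro ⟨i, hi, rfl⟩; exact ⟨⟨i, hi⟩, rfl⟩
    · rintro ⟨i, rfl⟩; exact ⟨i.1, i.2, rfl⟩
  rw [hset] at hp ⊢
  obtain ⟨c, hc⟩ := (Submodule.mem_span_range_iff_exists_fun ℝ).mp hp
  set eB : B := ⟨e, he⟩ with heB
  set d : B → ℝ := fun i => c i - (if i = eB then ∑ j, c j else 0) with hddef
  have hgeB : g eB = 0 := by simp [hgdef, heB]
  have hdg : ∑ i, d i • g i = fun j => (p j : ℝ) := by
    rw [← hc, hddef]
    rw [Finset.sum_congr rfl (fun i _ => sub_smul (c i) _ (g i))]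
    rw [Finset.sum_sub_distrib]
    have : ∑ i : B, (if i = eB then ∑ j, c j else 0) • g i = 0 := by
      rw [Finset.sum_eq_single eB]
      · rw [hgeB, smul_zero]
      · intro i _ hi; simp [hi]
      · simp
    rw [this, sub_zero]
  have hdsum : ∑ i, d i = 0 := by
    rw [hddef]
    rw [Finset.sum_sub_distrib]
    simp
  have hdA : ∑ i, d i • A.transpose i.1 = fun j => (p j : ℝ) := by
    have hexpand : ∑ i, d i • g i
        = (∑ i, d i • A.transpose i.1) - (∑ i, d i) • A.transpose e := by
      rw [Finset.sum_smul, ← Finset.sum_sub_distrib]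
      exact Finset.sum_congr rfl (fun i _ => smul_sub (d i) _ _)
    rw [hexpand, hdsum, zero_smul, sub_zero] at hdg
    exact hdg
  -- the restricted matrix
  set M : Matrix k B ℝ := Matrix.of (fun j (i : B) => A j i.1) with hMdef
  have hMcols : LinearIndependent ℝ (fun i => M.transpose i) := hBind
  obtain ⟨f, hfinj, hfunit⟩ := exists_rows_invertible M hMcols
  set N : Matrix B B ℝ := M.submatrix f id with hNdef
  -- integer entries
  have hentry : ∀ i j, ∃ z : ℤ, (z : ℝ) = A i j := by
    intro i j
    obtain ⟨s, hs⟩ := hA.apply i j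
    exact ⟨s, by cases s <;> simp_all⟩
  choose Z hZ using hentry
  set Nz : Matrix B B ℤ := Matrix.of (fun i j : B => Z (f i) j.1) with hNzdef
  have hNz : Nz.map (Int.cast : ℤ → ℝ) = N := by
    ext i j
    simp [hNzdef, hNdef, hMdef, hZ]
  have hNdet : (Nz.det : ℝ) = N.det := by
    rw [← hNz]
    exact RingHom.map_det (Int.castRingHom ℝ) Nz
  have hNdet_ne : N.det ≠ 0 := by
    intro h0
    exact (Matrix.isUnit_iff_isUnit_det N).mp hfunit |>.ne_zero h0
  have hNzunit : IsUnit Nz.det := by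
    rw [Int.isUnit_iff]
    obtain ⟨s, hs⟩ := ((Matrix.isTotallyUnimodular_iff_fintype A).mp hA) B (fun i : B => f i) Subtype.val
    have hsub : (A.submatrix (fun i : B => f i) Subtype.val) = N := rfl
    rw [hsub] at hs
    cases s with
    | zero => exact absurd (by rw [← hs]; simp : N.det = 0) hNdet_ne
    | pos =>
      left
      have : (Nz.det : ℝ) = ((1 : ℤ) : ℝ) := by rw [hNdet, ← hs]; simp
      exact_mod_cast this
    | neg =>
      right
      have : (Nz.det : ℝ) = ((-1 : ℤ) : ℝ) := by rw [hNdet, ← hs]; simp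
      exact_mod_cast this
  set pz : B → ℤ := fun i => p (f i) with hpzdef
  set dz : B → ℤ := Nz⁻¹.mulVec pz with hdzdef
  have hNzmul : Nz.mulVec dz = pz := by
    rw [hdzdef, Matrix.mulVec_mulVec, Matrix.mul_nonsing_inv _ hNzunit, Matrix.one_mulVec]
  have hNmul : N.mulVec d = fun i => (p (f i) : ℝ) := by
    funext i
    have := congrFun hdA (f i)
    simp only [Finset.sum_apply, Pi.smul_apply, smul_eq_mul] at this
    simp only [Matrix.mulVec, dotProduct, hNdef, hMdef, Matrix.submatrix_apply,
      Matrix.of_apply, id_eq]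
    rw [← this]
    exact Finset.sum_congr rfl (fun j _ => mul_comm _ _)
  have hNmul' : N.mulVec (fun i => ((dz i : ℤ) : ℝ)) = fun i => (p (f i) : ℝ) := by
    funext i
    rw [← hNz]
    have := congrFun hNzmul i
    simp only [Matrix.mulVec, dotProduct, Matrix.map_apply] at this ⊢
    rw [hpzdef] at this
    exact_mod_cast congrArg (Int.cast : ℤ → ℝ) this
  have hdd : d = fun i => ((dz i : ℤ) : ℝ) := by
    have hinj : Function.Injective N.mulVec :=
      Matrix.mulVec_injective_iff_isUnit.mpr hfunit
    exact hinj (hNmul.trans hNmul'.symm)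
  have hfinal : (fun j => (p j : ℝ)) = ∑ i, dz i • g i := by
    rw [← hdg, hdd]
    exact Finset.sum_congr rfl (fun i _ => (Int.cast_smul_eq_zsmul ℝ (dz i) (g i)))
  rw [hfinal]
  exact Submodule.sum_mem _ (fun i _ => Submodule.smul_mem _ (dz i)
    (Submodule.subset_span ⟨i, rfl⟩))

/-- Let `A` be totally unimodular representing a co-Eulerian regular
oriented matroid of rank `r`, and let `B` be a basis (a maximal linearly independent set
of columns, i.e. an independent set of size `r`). Then the simplex on the columns of `B`
is unimodular: for a vertex `a_e` (`e ∈ B`), the differences `a_i - a_e` (`i ∈ B`)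
generate over `ℤ` every integer point of their real linear span. -/
theorem basis_simplex_unimodular
    {k n : Type*} [Fintype k] [Fintype n] [DecidableEq n]
    (A : Matrix k n ℝ) (hA : A.IsTotallyUnimodular)
    (hco : ∀ Cp Cm : Finset n, A.IsSignedCircuit Cp Cm → Cp.card = Cm.card)
    (B : Finset n) (hBind : LinearIndependent ℝ (fun i : B => A.transpose i.1))
    (hBcard : B.card = A.rank) :
    ∀ e ∈ B, ∀ p : k → ℤ,
      (fun j => (p j : ℝ)) ∈
        Submodule.span ℝ {v : k → ℝ | ∃ i ∈ B, v = A.transpose i - A.transpose e} →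
      (fun j => (p j : ℝ)) ∈
        Submodule.span ℤ {v : k → ℝ | ∃ i ∈ B, v = A.transpose i - A.transpose e} :=
  basis_simplex_unimodular' A hA B hBind
end
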